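/- arXiv:1304.0172 — 7 statements merged into one kernel-verified Lean document; each statement's English description precedes it below -/
import Mathlib

section
/- Fine's theorem: For a prime p and n ∈ ℕ with base-p digits n_σ, the number of j ∈ {0,1,...,n} such that C(n,j) is NOT divisible by p equals the product over all σ of (n_σ + 1). Equivalently, the number of j ∈ {0,...,n} with p ∣ C(n,j) equals (n+1) − Π_σ (n_σ + 1). -/
/-- The σ-th digit of `x` in base `p`. -/
def digit (p x σ : ℕ) : ℕ := x / p ^ σ % p

lemma digit_zero (p x : ℕ) : digit p x 0 = x % p := by simp [digit]

lemma digit_succ (p x σ : ℕ) : digit p x (σ + 1) = digit p (x / p) σ := by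
  simp [digit, Nat.div_div_eq_div_mul, pow_succ']

/-- Digitwise domination implies `j ≤ n`. -/
lemma le_of_digits_le (p : ℕ) (hp : 2 ≤ p) :
    ∀ a j n, j < p ^ a → (∀ σ < a, digit p j σ ≤ digit p n σ) → j ≤ n := by
  intro a
  induction a with
  | zero => intro j n hj _; simp at hj; omega
  | succ a ih =>
    intro j n hj hd
    have h1 : j % p ≤ n % p := by
      have := hd 0 (by omega); simpa [digit_zero] using this
    have h2 : j / p ≤ n / p := by
      refine ih (j / p) (n / p) ?_ ?_
      · rw [Nat.div_lt_iff_lt_mul (by omega)]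
        calc j < p ^ (a + 1) := hj
        _ = p ^ a * p := by ring
      · intro σ hσ
        have := hd (σ + 1) (by omega)
        simpa [digit_succ] using this
    have e1 : j = p * (j / p) + j % p := (Nat.div_add_mod j p).symm
    have e2 : n = p * (n / p) + n % p := (Nat.div_add_mod n p).symm
    have h3 := Nat.mul_le_mul_left p h2
    omega

/-- Counting numbers digitwise dominated by `n`. -/
lemma count_digits_le (p : ℕ) (hp : 2 ≤ p) :
    ∀ a n, ((Finset.range (p ^ a)).filter
        fun j => ∀ σ < a, digit p j σ ≤ digit p n σ).card
      = ∏ σ ∈ Finset.range a, (digit p n σ + 1) := by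
  intro a
  induction a with
  | zero => intro n; simp
  | succ a ih =>
    intro n
    have hp0 : 0 < p := by omega
    rw [Finset.prod_range_succ', digit_zero]
    simp only [digit_succ]
    rw [← ih (n / p)]
    -- bijection j ↦ (j % p, j / p)
    have key : ((Finset.range (p ^ (a + 1))).filter
          fun j => ∀ σ < a + 1, digit p j σ ≤ digit p n σ).card
        = (((Finset.range p).filter fun r => r ≤ n % p) ×ˢ
            ((Finset.range (p ^ a)).filter
              fun q => ∀ σ < a, digit p q σ ≤ digit p (n / p) σ)).card := by
      apply Finset.card_bij' (fun j _ => (j % p, j / p)) (fun x _ => x.1 + p * x.2)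
      · intro j hj
        simp only [Finset.mem_filter, Finset.mem_range] at hj
        obtain ⟨hjlt, hjd⟩ := hj
        simp only [Finset.mem_product, Finset.mem_filter, Finset.mem_range]
        refine ⟨⟨Nat.mod_lt _ hp0, ?_⟩, ?_, ?_⟩
        · have := hjd 0 (by omega); simpa [digit_zero] using this
        · rw [Nat.div_lt_iff_lt_mul hp0]
          calc j < p ^ (a + 1) := hjlt
          _ = p ^ a * p := by ring
        · intro σ hσ
          have := hjd (σ + 1) (by omega)
          simpa [digit_succ] using this
      · intro x hx
        simp only [Finset.mem_product, Finset.mem_filter, Finset.mem_range] at hx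
        obtain ⟨⟨hr, hrd⟩, hq, hqd⟩ := hx
        simp only [Finset.mem_filter, Finset.mem_range]
        constructor
        · calc x.1 + p * x.2 < p + p * x.2 := by omega
          _ = p * (x.2 + 1) := by ring
          _ ≤ p * p ^ a := by
            exact Nat.mul_le_mul_left p (by omega)
          _ = p ^ (a + 1) := by ring
        · intro σ hσ
          match σ with
          | 0 =>
            rw [digit_zero, digit_zero, Nat.add_mul_mod_self_left,
              Nat.mod_eq_of_lt hr]
            exact hrd
          | σ + 1 =>
            rw [digit_succ, digit_succ, Nat.add_mul_div_left _ _ hp0,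
              Nat.div_eq_of_lt hr, Nat.zero_add]
            exact hqd σ (by omega)
      · intro j _; exact Nat.mod_add_div j p
      · intro x hx
        simp only [Finset.mem_product, Finset.mem_filter, Finset.mem_range] at hx
        obtain ⟨⟨hr, _⟩, _, _⟩ := hx
        rw [Nat.add_mul_mod_self_left, Nat.mod_eq_of_lt hr,
          Nat.add_mul_div_left _ _ hp0, Nat.div_eq_of_lt hr, Nat.zero_add]
    rw [key, Finset.card_product]
    have : ((Finset.range p).filter fun r => r ≤ n % p) = Finset.range (n % p + 1) := by
      ext r
      simp only [Finset.mem_filter, Finset.mem_range]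
      have := Nat.mod_lt n hp0
      omega
    rw [this, Finset.card_range, mul_comm]

/-- **Fine's theorem**: the number of `j ∈ {0,…,n}` with `C(n,j)` not divisible by the
prime `p` equals `∏_σ (n_σ + 1)`, where `n_σ` are the base-`p` digits of `n`;
equivalently, the number of `j ∈ {0,…,n}` with `p ∣ C(n,j)` equals
`(n+1) - ∏_σ (n_σ + 1)`. (Digits with index `σ > n` vanish, so the product over
`σ < n+1` is the full product.) -/
theorem fine_theorem (p : ℕ) (hp : p.Prime) (n : ℕ) :
    (((Finset.range (n + 1)).filter fun j => ¬ p ∣ Nat.choose n j).card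
      = ∏ σ ∈ Finset.range (n + 1), (digit p n σ + 1)) ∧
    (((Finset.range (n + 1)).filter fun j => p ∣ Nat.choose n j).card
      = (n + 1) - ∏ σ ∈ Finset.range (n + 1), (digit p n σ + 1)) := by
  haveI : Fact p.Prime := ⟨hp⟩
  have hp2 : 2 ≤ p := hp.two_le
  have hnp : n < p ^ (n + 1) := by
    calc n < 2 ^ n := Nat.lt_two_pow_self
    _ ≤ 2 ^ (n + 1) := Nat.pow_le_pow_right (by omega) (by omega)
    _ ≤ p ^ (n + 1) := Nat.pow_le_pow_left hp2 _
  -- key fact: `p ∣ C(n_σ, j_σ)` iff `n_σ < j_σ`, for digits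
  have digit_lt : ∀ m σ, digit p m σ < p := fun m σ => Nat.mod_lt _ (by omega)
  have dvd_digit_choose : ∀ j σ,
      p ∣ Nat.choose (digit p n σ) (digit p j σ) ↔ digit p n σ < digit p j σ := by
    intro j σ
    constructor
    · intro hdvd
      by_contra hlt
      push_neg at hlt
      have hfac : Nat.choose (digit p n σ) (digit p j σ) ∣
          Nat.factorial (digit p n σ) :=
        ⟨Nat.factorial (digit p j σ) * Nat.factorial (digit p n σ - digit p j σ),
          by rw [← mul_assoc, Nat.choose_mul_factorial_mul_factorial hlt]⟩
      have h2 : p ∣ Nat.factorial (digit p n σ) := hdvd.trans hfac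
      have h3 := (Nat.Prime.dvd_factorial hp).mp h2
      have h4 := digit_lt n σ
      omega
    · intro h
      rw [Nat.choose_eq_zero_of_lt h]
      exact dvd_zero p
  -- Lucas-based characterization of the filter set
  have char : (Finset.range (n + 1)).filter (fun j => ¬ p ∣ Nat.choose n j)
      = (Finset.range (p ^ (n + 1))).filter
          fun j => ∀ σ < n + 1, digit p j σ ≤ digit p n σ := by
    ext j
    simp only [Finset.mem_filter, Finset.mem_range]
    constructor
    · rintro ⟨hj, hnd⟩
      have hjp : j < p ^ (n + 1) := by omega
      have lucas := Choose.choose_modEq_prod_range_choose_nat (p := p) hnp hjp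
      have hdvd : ¬ p ∣ ∏ i ∈ Finset.range (n + 1),
          Nat.choose (n / p ^ i % p) (j / p ^ i % p) := by
        intro h
        exact hnd ((Nat.modEq_zero_iff_dvd).mp
          (lucas.trans ((Nat.modEq_zero_iff_dvd).mpr h)))
      refine ⟨hjp, fun σ hσ => ?_⟩
      by_contra hlt
      push_neg at hlt
      apply hdvd
      have hz : Nat.choose (n / p ^ σ % p) (j / p ^ σ % p) = 0 :=
        Nat.choose_eq_zero_of_lt hlt
      rw [Finset.prod_eq_zero (Finset.mem_range.mpr hσ) hz]
      exact dvd_zero p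
    · rintro ⟨hjp, hd⟩
      have hjn : j ≤ n := le_of_digits_le p hp2 (n + 1) j n hjp hd
      refine ⟨by omega, fun hdvd => ?_⟩
      have lucas := Choose.choose_modEq_prod_range_choose_nat (p := p) hnp hjp
      have : p ∣ ∏ i ∈ Finset.range (n + 1),
          Nat.choose (n / p ^ i % p) (j / p ^ i % p) :=
        (Nat.modEq_zero_iff_dvd).mp (lucas.symm.trans ((Nat.modEq_zero_iff_dvd).mpr hdvd))
      obtain ⟨σ, hσ, hdv⟩ := (hp.prime.dvd_finset_prod_iff _).mp this
      have := (dvd_digit_choose j σ).mp hdv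
      exact absurd (hd σ (Finset.mem_range.mp hσ)) (by omega)
  have h1 : ((Finset.range (n + 1)).filter fun j => ¬ p ∣ Nat.choose n j).card
      = ∏ σ ∈ Finset.range (n + 1), (digit p n σ + 1) := by
    rw [char, count_digits_le p hp2]
  refine ⟨h1, ?_⟩
  have := Finset.card_filter_add_card_filter_not
    (s := Finset.range (n + 1)) (p := fun j => p ∣ Nat.choose n j)
  rw [Finset.card_range] at this
  omega
end

section
/- For a prime p, n ∈ ℕ with base-p digits n_σ, and i ≥ 1, the number of j ∈ {0,...,n} such that C(n,j) ≡ 0 mod p and the pair (n,j) lies in class ī equals Φ(i,n) = (p^i − 1 − Σ_{μ=0}^{i-1} n_μ p^μ) · n_i · Π_{σ=i+1}^∞ (n_σ + 1). -/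
/-- For a pair `(n,j)` with `p ∣ C(n,j)`, the class index `i` of `(n,j)`:
with `L := max {σ | j_σ > n_σ}`, it is `i := min {σ | σ > L ∧ j_σ < n_σ}`. -/
noncomputable def classIdx (p n j : ℕ) : ℕ :=
  sInf {σ : ℕ | σ > sSup {τ : ℕ | digit p n τ < digit p j τ} ∧ digit p j σ < digit p n σ}

section Aux

variable {p : ℕ}

lemma digit_lt (hp : 2 ≤ p) (x σ : ℕ) : digit p x σ < p := Nat.mod_lt _ (by omega)

lemma digit_div_pow (x t σ : ℕ) : digit p (x / p ^ t) σ = digit p x (t + σ) := by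
  simp [digit, Nat.div_div_eq_div_mul, ← pow_add]

lemma digit_eq_zero_of_lt {x σ : ℕ} (hx : x < p ^ σ) : digit p x σ = 0 := by
  simp [digit, Nat.div_eq_of_lt hx]

lemma pow_le_of_digit_ne {x σ : ℕ} (h : digit p x σ ≠ 0) : p ^ σ ≤ x := by
  by_contra hc
  exact h (digit_eq_zero_of_lt (by omega))

lemma digit_eq_zero_of_lt' (hp : 2 ≤ p) {x σ : ℕ} (hx : x < σ) : digit p x σ = 0 :=
  digit_eq_zero_of_lt (hx.trans (Nat.lt_pow_self (n := σ) (a := p) (by omega)))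

/-- mod `p^(t+1)` decomposition. -/
lemma mod_pow_succ (hp : 2 ≤ p) (x t : ℕ) :
    x % p ^ (t + 1) = x % p ^ t + digit p x t * p ^ t := by
  have h1 : x % p ^ (t + 1) % p ^ t = x % p ^ t :=
    Nat.mod_mod_of_dvd _ (pow_dvd_pow p (by omega))
  have h2 : x % p ^ (t + 1) / p ^ t = digit p x t := by
    rw [pow_succ, Nat.mod_mul_right_div_self]; rfl
  rw [← h1, ← h2]
  exact (Nat.mod_add_div' _ _).symm

lemma sum_digits_eq_mod (hp : 2 ≤ p) (x : ℕ) (i : ℕ) :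
    ∑ μ ∈ Finset.range i, digit p x μ * p ^ μ = x % p ^ i := by
  induction i with
  | zero => simp [Nat.mod_one]
  | succ i ih => rw [Finset.sum_range_succ, ih, mod_pow_succ hp]

lemma le_of_digits_le_s3 (hp : 2 ≤ p) : ∀ x y : ℕ, (∀ σ, digit p x σ ≤ digit p y σ) → x ≤ y := by
  intro x
  induction x using Nat.strong_induction_on with
  | _ x ih =>
    intro y h
    rcases Nat.eq_zero_or_pos x with hx | hx
    · omega
    have hxp : x / p < x := Nat.div_lt_self hx (by omega)
    have h1 : x / p ≤ y / p := by
      apply ih _ hxp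
      intro σ
      have e1 := digit_div_pow (p := p) x 1 σ
      have e2 := digit_div_pow (p := p) y 1 σ
      rw [pow_one] at e1 e2
      rw [e1, e2]; exact h _
    have h0 : x % p ≤ y % p := by simpa [digit] using h 0
    have := Nat.div_add_mod x p
    have := Nat.div_add_mod y p
    have : p * (x / p) ≤ p * (y / p) := Nat.mul_le_mul_left p h1
    omega

lemma eq_of_digits_eq (hp : 2 ≤ p) (x y : ℕ) (h : ∀ σ, digit p x σ = digit p y σ) : x = y :=
  le_antisymm (le_of_digits_le_s3 hp x y fun σ => (h σ).le)
    (le_of_digits_le_s3 hp y x fun σ => (h σ).ge)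

/-- Lexicographic comparison at the top differing digit. -/
lemma lt_of_digit_lt (hp : 2 ≤ p) (x y τ : ℕ) (hd : digit p x τ < digit p y τ)
    (hh : ∀ σ, τ < σ → digit p x σ = digit p y σ) : x < y := by
  have hdiv : x / p ^ (τ + 1) = y / p ^ (τ + 1) := by
    apply eq_of_digits_eq hp
    intro σ
    rw [digit_div_pow, digit_div_pow]
    exact hh _ (by omega)
  have hmod : x % p ^ (τ + 1) < y % p ^ (τ + 1) := by
    rw [mod_pow_succ hp, mod_pow_succ hp]
    have h1 : x % p ^ τ < p ^ τ := Nat.mod_lt _ (by positivity)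
    have h2 : digit p x τ * p ^ τ + p ^ τ ≤ digit p y τ * p ^ τ := by
      have h3 : (digit p x τ + 1) * p ^ τ ≤ digit p y τ * p ^ τ :=
        Nat.mul_le_mul_right _ (by omega)
      rw [add_one_mul] at h3
      omega
    calc x % p ^ τ + digit p x τ * p ^ τ
        < p ^ τ + digit p x τ * p ^ τ := Nat.add_lt_add_right h1 _
      _ ≤ digit p y τ * p ^ τ := by rw [Nat.add_comm]; exact h2
      _ ≤ y % p ^ τ + digit p y τ * p ^ τ := Nat.le_add_left _ _
  have e1 := Nat.div_add_mod x (p ^ (τ + 1))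
  have e2 := Nat.div_add_mod y (p ^ (τ + 1))
  rw [hdiv] at e1
  omega

lemma digit_mod_pow (hp : 2 ≤ p) (x t σ : ℕ) :
    digit p (x % p ^ t) σ = if σ < t then digit p x σ else 0 := by
  split
  · next h =>
    have ht : p ^ t = p ^ σ * p ^ (t - σ) := by rw [← pow_add]; congr 1; omega
    unfold digit
    rw [ht, Nat.mod_mul_right_div_self]
    exact Nat.mod_mod_of_dvd _ (dvd_pow_self p (by omega))
  · next h =>
    exact digit_eq_zero_of_lt (lt_of_lt_of_le (Nat.mod_lt _ (by positivity))
      (Nat.pow_le_pow_right (by omega) (by omega)))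

lemma digit_zero_eq_mod {x : ℕ} : digit p x 0 = x % p := by simp [digit]

lemma digit_succ_eq_div {x σ : ℕ} : digit p x (σ + 1) = digit p (x / p) σ := by
  have := digit_div_pow (p := p) x 1 σ
  rw [pow_one] at this
  rw [this, Nat.add_comm]

/-- Lucas: `p` divides the binomial coefficient iff some digit of `j` exceeds that of `n`. -/
lemma dvd_choose_iff_exists_digit (hp : p.Prime) {n j : ℕ} :
    p ∣ Nat.choose n j ↔ ∃ τ, digit p n τ < digit p j τ := by
  haveI : Fact p.Prime := ⟨hp⟩
  have hp2 : 2 ≤ p := hp.two_le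
  set a := n + j + 1 with ha
  have han : n < p ^ a := lt_of_lt_of_le (by omega)
    (Nat.le_trans (Nat.lt_pow_self (n := a) one_lt_two).le (Nat.pow_le_pow_left hp2 a))
  have haj : j < p ^ a := lt_of_lt_of_le (by omega)
    (Nat.le_trans (Nat.lt_pow_self (n := a) one_lt_two).le (Nat.pow_le_pow_left hp2 a))
  have H := Choose.choose_modEq_prod_range_choose_nat (p := p) han haj
  have key : p ∣ Nat.choose n j ↔ p ∣ ∏ τ ∈ Finset.range a,
      Nat.choose (n / p ^ τ % p) (j / p ^ τ % p) := by
    rw [Nat.dvd_iff_mod_eq_zero, Nat.dvd_iff_mod_eq_zero, H]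
  rw [key, Nat.Prime.prime hp |>.dvd_finset_prod_iff]
  constructor
  · rintro ⟨τ, -, hd⟩
    refine ⟨τ, ?_⟩
    by_contra hc
    push_neg at hc
    have hcle : digit p j τ ≤ digit p n τ := hc
    have hfac := Nat.choose_mul_factorial_mul_factorial hcle
    have hdvd : p ∣ Nat.factorial (digit p n τ) := by
      rw [← hfac]
      exact (hd.mul_right _).mul_right _
    have h4 := (Nat.Prime.dvd_factorial hp).mp hdvd
    have h5 : digit p n τ < p := digit_lt hp2 n τ
    omega
  · rintro ⟨τ, hd⟩
    have hτ : τ < a := by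
      have h1 : digit p j τ ≠ 0 := by omega
      have h2 : p ^ τ ≤ j := pow_le_of_digit_ne h1
      have h3 : τ < p ^ τ := Nat.lt_pow_self (n := τ) (a := p) (by omega)
      omega
    refine ⟨τ, Finset.mem_range.mpr hτ, ?_⟩
    show p ∣ Nat.choose (digit p n τ) (digit p j τ)
    rw [Nat.choose_eq_zero_of_lt hd]
    exact dvd_zero p

open scoped Classical in
/-- The set of numbers whose base-`p` digits are dominated by those of `N`. -/
noncomputable def domSet (p N : ℕ) : Finset ℕ :=
  (Finset.range (N + 1)).filter fun c => ∀ σ, digit p c σ ≤ digit p N σ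

lemma mem_domSet (hp : 2 ≤ p) {N c : ℕ} :
    c ∈ domSet p N ↔ ∀ σ, digit p c σ ≤ digit p N σ := by
  classical
  simp only [domSet, Finset.mem_filter, Finset.mem_range]
  exact ⟨fun h => h.2, fun h => ⟨Nat.lt_succ_of_le (le_of_digits_le_s3 hp c N h), h⟩⟩

lemma domSet_card (hp : 2 ≤ p) :
    ∀ K N, N < p ^ K → (domSet p N).card = ∏ σ ∈ Finset.range K, (digit p N σ + 1) := by
  intro K
  induction K with
  | zero =>
    intro N hN
    have hN0 : N = 0 := by simpa using hN
    subst hN0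
    have h1 : domSet p 0 = {0} := by
      ext c
      rw [mem_domSet hp]
      simp only [Finset.mem_singleton]
      constructor
      · intro h
        have := le_of_digits_le_s3 hp c 0 h
        omega
      · rintro rfl σ; exact le_rfl
    rw [h1]; simp
  | succ K ih =>
    intro N hN
    have hpow : (0:ℕ) < p := by omega
    have hcard : (domSet p N).card = ((Finset.range (N % p + 1)) ×ˢ domSet p (N / p)).card := by
      apply Finset.card_nbij' (fun c => (c % p, c / p)) (fun x => x.1 + p * x.2)
      · intro c hc
        simp only [Finset.mem_coe] at hc ⊢
        rw [mem_domSet hp] at hc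
        rw [Finset.mem_product, Finset.mem_range]
        constructor
        · have := hc 0
          rw [digit_zero_eq_mod, digit_zero_eq_mod] at this
          omega
        · rw [mem_domSet hp]
          intro σ
          rw [← digit_succ_eq_div, ← digit_succ_eq_div]
          exact hc (σ + 1)
      · rintro ⟨a, b⟩ hab
        simp only [Finset.mem_coe] at hab
        refine Finset.mem_coe.mpr ?_
        rw [Finset.mem_product, Finset.mem_range, mem_domSet hp] at hab
        obtain ⟨ha, hb⟩ := hab
        have hap : a < p := by have := Nat.mod_lt N hpow; omega
        rw [mem_domSet hp]
        intro σ
        match σ with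
        | 0 =>
          rw [digit_zero_eq_mod, digit_zero_eq_mod]
          simp only
          rw [Nat.add_mul_mod_self_left, Nat.mod_eq_of_lt hap]
          omega
        | σ + 1 =>
          rw [digit_succ_eq_div, digit_succ_eq_div]
          simp only
          rw [Nat.add_mul_div_left _ _ hpow, Nat.div_eq_of_lt hap, Nat.zero_add]
          exact hb σ
      · intro c hc
        exact Nat.mod_add_div c p
      · rintro ⟨a, b⟩ hab
        simp only [Finset.mem_coe] at hab
        rw [Finset.mem_product, Finset.mem_range] at hab
        have hap : a < p := by have := Nat.mod_lt N hpow; omega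
        simp only
        rw [Nat.add_mul_mod_self_left, Nat.mod_eq_of_lt hap,
          Nat.add_mul_div_left _ _ hpow, Nat.div_eq_of_lt hap, Nat.zero_add]
    rw [hcard, Finset.card_product, Finset.card_range]
    rw [ih (N / p) (Nat.div_lt_of_lt_mul (by rw [← pow_succ'] ; exact hN))]
    rw [Finset.prod_range_succ', digit_zero_eq_mod, Nat.mul_comm]
    congr 1
    apply Finset.prod_congr rfl
    intro σ _
    rw [digit_succ_eq_div]

/-- Characterization of membership in class `ī`. -/
lemma class_iff (hp : p.Prime) {n j i : ℕ} (hi : 1 ≤ i) (hj : j ≤ n) :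
    (p ∣ Nat.choose n j ∧ classIdx p n j = i) ↔
      (n % p ^ i < j % p ^ i ∧ digit p j i < digit p n i ∧
        ∀ σ, i < σ → digit p j σ ≤ digit p n σ) := by
  have hp2 : 2 ≤ p := hp.two_le
  have hSbdd : BddAbove {τ : ℕ | digit p n τ < digit p j τ} := by
    refine ⟨j, fun τ hτ => ?_⟩
    simp only [Set.mem_setOf_eq] at hτ
    have h1 : digit p j τ ≠ 0 := by omega
    have h2 := pow_le_of_digit_ne h1
    have h3 : τ < p ^ τ := Nat.lt_pow_self (n := τ) (a := p) (by omega)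
    omega
  constructor
  · rintro ⟨hdvd, hcls⟩
    have hSne : {τ : ℕ | digit p n τ < digit p j τ}.Nonempty :=
      (dvd_choose_iff_exists_digit hp).mp hdvd
    set L := sSup {τ : ℕ | digit p n τ < digit p j τ} with hL
    have hLmem : digit p n L < digit p j L := Nat.sSup_mem hSne hSbdd
    have hLmax : ∀ σ, L < σ → digit p j σ ≤ digit p n σ := by
      intro σ hσ
      by_contra hc
      have h1 : σ ∈ {τ : ℕ | digit p n τ < digit p j τ} := by
        simp only [Set.mem_setOf_eq]; omega
      have := le_csSup hSbdd h1
      omega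
    have hcls' : sInf {σ : ℕ | σ > L ∧ digit p j σ < digit p n σ} = i := hcls
    have hTne : {σ : ℕ | σ > L ∧ digit p j σ < digit p n σ}.Nonempty := by
      by_contra hc
      rw [Set.not_nonempty_iff_eq_empty] at hc
      have heq : ∀ σ, L < σ → digit p n σ = digit p j σ := by
        intro σ hσ
        have h1 := hLmax σ hσ
        have h2 : σ ∉ {σ : ℕ | σ > L ∧ digit p j σ < digit p n σ} := by
          rw [hc]; exact Set.notMem_empty σ
        simp only [Set.mem_setOf_eq, not_and, not_lt] at h2
        have := h2 hσ
        omega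
      have : n < j := lt_of_digit_lt hp2 n j L hLmem heq
      omega
    have hiT : i ∈ {σ : ℕ | σ > L ∧ digit p j σ < digit p n σ} := by
      rw [← hcls']
      exact Nat.sInf_mem hTne
    simp only [Set.mem_setOf_eq] at hiT
    obtain ⟨hiL, hdig⟩ := hiT
    have hmid : ∀ σ, L < σ → σ < i → digit p j σ = digit p n σ := by
      intro σ h1 h2
      have h3 : σ ∉ {σ : ℕ | σ > L ∧ digit p j σ < digit p n σ} := by
        apply Nat.notMem_of_lt_sInf
        rw [hcls']; exact h2
      simp only [Set.mem_setOf_eq, not_and, not_lt] at h3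
      have h4 := h3 h1
      have h5 := hLmax σ h1
      omega
    refine ⟨?_, hdig, fun σ hσ => hLmax σ (by omega)⟩
    apply lt_of_digit_lt hp2 _ _ L
    · rw [digit_mod_pow hp2, digit_mod_pow hp2, if_pos (by omega : L < i),
        if_pos (by omega : L < i)]
      exact hLmem
    · intro σ hσ
      rw [digit_mod_pow hp2, digit_mod_pow hp2]
      split
      · next h => exact (hmid σ hσ h).symm
      · rfl
  · rintro ⟨h1, h2, h3⟩
    have hSne : {τ : ℕ | digit p n τ < digit p j τ}.Nonempty := by
      by_contra hc
      rw [Set.not_nonempty_iff_eq_empty] at hc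
      have hle : ∀ σ, digit p (j % p ^ i) σ ≤ digit p (n % p ^ i) σ := by
        intro σ
        rw [digit_mod_pow hp2, digit_mod_pow hp2]
        split
        · next h =>
          have hσ : σ ∉ {τ : ℕ | digit p n τ < digit p j τ} := by
            rw [hc]; exact Set.notMem_empty σ
          simp only [Set.mem_setOf_eq, not_lt] at hσ
          exact hσ
        · exact le_rfl
      have := le_of_digits_le_s3 hp2 _ _ hle
      omega
    set L := sSup {τ : ℕ | digit p n τ < digit p j τ} with hL
    have hLmem : digit p n L < digit p j L := Nat.sSup_mem hSne hSbdd
    have hLmax : ∀ σ, L < σ → digit p j σ ≤ digit p n σ := by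
      intro σ hσ
      by_contra hc
      have hmem : σ ∈ {τ : ℕ | digit p n τ < digit p j τ} := by
        simp only [Set.mem_setOf_eq]; omega
      have := le_csSup hSbdd hmem
      omega
    have hLi : L < i := by
      rcases lt_trichotomy L i with h | h | h
      · exact h
      · rw [h] at hLmem; omega
      · have := h3 L h; omega
    -- digits agree strictly between L and i
    have hmid : ∀ σ, L < σ → σ < i → digit p j σ = digit p n σ := by
      intro σ hσ1 hσ2
      have hle := hLmax σ hσ1
      by_contra hc
      have hub : digit p j σ < digit p n σ := by omega
      -- find the top disagreeing digit below i
      have hUne : {τ : ℕ | τ < i ∧ digit p j τ < digit p n τ}.Nonempty := ⟨σ, hσ2, hub⟩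
      have hUbdd : BddAbove {τ : ℕ | τ < i ∧ digit p j τ < digit p n τ} :=
        ⟨i, fun τ hτ => hτ.1.le⟩
      set M := sSup {τ : ℕ | τ < i ∧ digit p j τ < digit p n τ} with hM
      have hMmem := Nat.sSup_mem hUne hUbdd
      simp only [Set.mem_setOf_eq] at hMmem
      obtain ⟨hMi, hMd⟩ := hMmem
      have hMσ : σ ≤ M := le_csSup hUbdd ⟨hσ2, hub⟩
      have hcontra : j % p ^ i < n % p ^ i := by
        apply lt_of_digit_lt hp2 _ _ M
        · rw [digit_mod_pow hp2, digit_mod_pow hp2, if_pos hMi, if_pos hMi]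
          exact hMd
        · intro ρ hρ
          rw [digit_mod_pow hp2, digit_mod_pow hp2]
          split
          · next hρi =>
            have hn1 : ρ ∉ {τ : ℕ | τ < i ∧ digit p j τ < digit p n τ} := by
              intro hmem
              have := le_csSup hUbdd hmem
              omega
            simp only [Set.mem_setOf_eq, not_and, not_lt] at hn1
            have h5 := hn1 hρi
            have h6 := hLmax ρ (by omega)
            omega
          · rfl
      omega
    constructor
    · exact (dvd_choose_iff_exists_digit hp).mpr ⟨L, hLmem⟩
    · have hiT : i ∈ {σ : ℕ | σ > L ∧ digit p j σ < digit p n σ} := ⟨hLi, h2⟩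
      have hne : {σ : ℕ | σ > L ∧ digit p j σ < digit p n σ}.Nonempty := ⟨i, hiT⟩
      have hle : sInf {σ : ℕ | σ > L ∧ digit p j σ < digit p n σ} ≤ i := Nat.sInf_le hiT
      have hmem := Nat.sInf_mem hne
      simp only [Set.mem_setOf_eq] at hmem
      show sInf {σ : ℕ | σ > L ∧ digit p j σ < digit p n σ} = i
      by_contra hc
      have hlt : sInf {σ : ℕ | σ > L ∧ digit p j σ < digit p n σ} < i := by omega
      have := hmid _ hmem.1 hlt
      omega

end Aux

/-- The number of `j ∈ {0,…,n}` with `p ∣ C(n,j)` and `(n,j)` in class `ī` equals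
`Φ(i,n) = (pⁱ − 1 − Σ_{μ<i} n_μ p^μ) · n_i · ∏_{σ>i} (n_σ + 1)`.
(Digits of `n` with index `σ > n` vanish, so the product over `i+1 ≤ σ < n+1` is
the full infinite product.) -/
theorem card_class_eq_Phi (p : ℕ) (hp : p.Prime) (n i : ℕ) (hi : 1 ≤ i) :
    (((Finset.range (n + 1)).filter fun j =>
        p ∣ Nat.choose n j ∧ classIdx p n j = i).card)
      = (p ^ i - 1 - ∑ μ ∈ Finset.range i, digit p n μ * p ^ μ) * digit p n i *
          ∏ σ ∈ Finset.Ico (i + 1) (n + 1), (digit p n σ + 1) := by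
  classical
  have hp2 : 2 ≤ p := hp.two_le
  have hppos : (0:ℕ) < p := by omega
  have hpipos : (0:ℕ) < p ^ i := by positivity
  have hpi1pos : (0:ℕ) < p ^ (i+1) := by positivity
  -- decomposition of any x
  have key : ∀ x : ℕ, x % p ^ i + digit p x i * p ^ i + x / p ^ (i+1) * p ^ (i+1) = x := by
    intro x
    have e1 := Nat.div_add_mod x (p ^ (i+1))
    have e2 := mod_pow_succ hp2 x i
    have e3 : p ^ (i+1) * (x / p ^ (i+1)) = x / p ^ (i+1) * p ^ (i+1) := Nat.mul_comm _ _
    omega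
  -- rewrite the filter using the characterization
  have hfilter : ((Finset.range (n + 1)).filter fun j =>
        p ∣ Nat.choose n j ∧ classIdx p n j = i)
      = ((Finset.range (n + 1)).filter fun j =>
          n % p ^ i < j % p ^ i ∧ digit p j i < digit p n i ∧
            ∀ σ, i < σ → digit p j σ ≤ digit p n σ) := by
    apply Finset.filter_congr
    intro j hj
    rw [Finset.mem_range] at hj
    exact class_iff hp hi (by omega)
  rw [hfilter]
  -- bijection with a triple product
  have hbij : ((Finset.range (n + 1)).filter fun j =>
          n % p ^ i < j % p ^ i ∧ digit p j i < digit p n i ∧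
            ∀ σ, i < σ → digit p j σ ≤ digit p n σ).card
      = ((Finset.Ico (n % p ^ i + 1) (p ^ i)) ×ˢ
          ((Finset.range (digit p n i)) ×ˢ domSet p (n / p ^ (i+1)))).card := by
    apply Finset.card_nbij' (fun j => (j % p ^ i, (digit p j i, j / p ^ (i+1))))
      (fun x => x.1 + x.2.1 * p ^ i + x.2.2 * p ^ (i+1))
    · intro j hjmem
      simp only [Finset.mem_coe, Finset.mem_filter, Finset.mem_range] at hjmem
      obtain ⟨hjn, hj1, hj2, hj3⟩ := hjmem
      simp only [Finset.mem_coe, Finset.mem_product, Finset.mem_Ico, Finset.mem_range]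
      refine ⟨⟨by omega, Nat.mod_lt _ hpipos⟩, hj2, ?_⟩
      rw [mem_domSet hp2]
      intro σ
      rw [digit_div_pow, digit_div_pow]
      exact hj3 _ (by omega)
    · rintro ⟨a, b, c⟩ hmem
      simp only [Finset.mem_coe, Finset.mem_product, Finset.mem_Ico, Finset.mem_range] at hmem
      obtain ⟨⟨ha1, ha2⟩, hb, hc⟩ := hmem
      rw [mem_domSet hp2] at hc
      have hbp : b < p := lt_of_lt_of_le hb (digit_lt hp2 n i).le
      have hj' : a + b * p ^ i + c * p ^ (i+1) = a + (b + p * c) * p ^ i := by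
        rw [pow_succ]; ring
      have e1 : (a + b * p ^ i + c * p ^ (i+1)) % p ^ i = a := by
        rw [hj', Nat.add_mul_mod_self_right, Nat.mod_eq_of_lt ha2]
      have e2 : (a + b * p ^ i + c * p ^ (i+1)) / p ^ i = b + p * c := by
        rw [hj', Nat.add_mul_div_right _ _ hpipos, Nat.div_eq_of_lt ha2, Nat.zero_add]
      have e3 : digit p (a + b * p ^ i + c * p ^ (i+1)) i = b := by
        show (a + b * p ^ i + c * p ^ (i+1)) / p ^ i % p = b
        rw [e2, Nat.add_mul_mod_self_left, Nat.mod_eq_of_lt hbp]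
      have e4 : (a + b * p ^ i + c * p ^ (i+1)) / p ^ (i+1) = c := by
        have hdd : (a + b * p ^ i + c * p ^ (i+1)) / p ^ (i+1)
            = (a + b * p ^ i + c * p ^ (i+1)) / p ^ i / p := by
          rw [Nat.div_div_eq_div_mul, ← pow_succ]
        rw [hdd, e2, Nat.add_mul_div_left _ _ hppos, Nat.div_eq_of_lt hbp, Nat.zero_add]
      have hcn : c ≤ n / p ^ (i+1) := le_of_digits_le_s3 hp2 _ _ hc
      have hjn : a + b * p ^ i + c * p ^ (i+1) < n := by
        have hb1 : b * p ^ i + p ^ i ≤ digit p n i * p ^ i := by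
          have h' := Nat.mul_le_mul_right (p ^ i) (show b + 1 ≤ digit p n i by omega)
          rw [add_one_mul] at h'
          omega
        have hc1 : c * p ^ (i+1) ≤ n / p ^ (i+1) * p ^ (i+1) :=
          Nat.mul_le_mul_right _ hcn
        calc a + b * p ^ i + c * p ^ (i+1)
            < p ^ i + b * p ^ i + c * p ^ (i+1) :=
              Nat.add_lt_add_right (Nat.add_lt_add_right ha2 (b * p ^ i)) (c * p ^ (i+1))
          _ = (b * p ^ i + p ^ i) + c * p ^ (i+1) := by ring
          _ ≤ digit p n i * p ^ i + n / p ^ (i+1) * p ^ (i+1) := Nat.add_le_add hb1 hc1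
          _ ≤ n % p ^ i + (digit p n i * p ^ i + n / p ^ (i+1) * p ^ (i+1)) :=
              Nat.le_add_left _ _
          _ = n % p ^ i + digit p n i * p ^ i + n / p ^ (i+1) * p ^ (i+1) :=
              (Nat.add_assoc _ _ _).symm
          _ = n := key n
      simp only [Finset.mem_coe, Finset.mem_filter, Finset.mem_range]
      refine ⟨by omega, by omega, by rw [e3]; exact hb, ?_⟩
      intro σ hσ
      have hσeq : i + 1 + (σ - i - 1) = σ := by omega
      have d1 : digit p (a + b * p ^ i + c * p ^ (i+1)) σ = digit p c (σ - i - 1) := by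
        have hd1 := digit_div_pow (p := p) (a + b * p ^ i + c * p ^ (i+1)) (i+1) (σ - i - 1)
        rw [e4, hσeq] at hd1
        exact hd1.symm
      have d2 : digit p (n / p ^ (i+1)) (σ - i - 1) = digit p n σ := by
        rw [digit_div_pow, hσeq]
      rw [d1, ← d2]
      exact hc _
    · intro j hjmem
      exact key j
    · rintro ⟨a, b, c⟩ hmem
      simp only [Finset.mem_coe, Finset.mem_product, Finset.mem_Ico, Finset.mem_range] at hmem
      obtain ⟨⟨ha1, ha2⟩, hb, hc⟩ := hmem
      rw [mem_domSet hp2] at hc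
      have hbp : b < p := lt_of_lt_of_le hb (digit_lt hp2 n i).le
      have hj' : a + b * p ^ i + c * p ^ (i+1) = a + (b + p * c) * p ^ i := by
        rw [pow_succ]; ring
      have e1 : (a + b * p ^ i + c * p ^ (i+1)) % p ^ i = a := by
        rw [hj', Nat.add_mul_mod_self_right, Nat.mod_eq_of_lt ha2]
      have e2 : (a + b * p ^ i + c * p ^ (i+1)) / p ^ i = b + p * c := by
        rw [hj', Nat.add_mul_div_right _ _ hpipos, Nat.div_eq_of_lt ha2, Nat.zero_add]
      have e3 : digit p (a + b * p ^ i + c * p ^ (i+1)) i = b := by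
        show (a + b * p ^ i + c * p ^ (i+1)) / p ^ i % p = b
        rw [e2, Nat.add_mul_mod_self_left, Nat.mod_eq_of_lt hbp]
      have e4 : (a + b * p ^ i + c * p ^ (i+1)) / p ^ (i+1) = c := by
        have hdd : (a + b * p ^ i + c * p ^ (i+1)) / p ^ (i+1)
            = (a + b * p ^ i + c * p ^ (i+1)) / p ^ i / p := by
          rw [Nat.div_div_eq_div_mul, ← pow_succ]
        rw [hdd, e2, Nat.add_mul_div_left _ _ hppos, Nat.div_eq_of_lt hbp, Nat.zero_add]
      simp only
      rw [e1, e3, e4]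
  rw [hbij, Finset.card_product, Finset.card_product, Nat.card_Ico, Finset.card_range]
  -- the domSet cardinality
  have hdom : (domSet p (n / p ^ (i+1))).card
      = ∏ σ ∈ Finset.range (n + 1), (digit p (n / p ^ (i+1)) σ + 1) := by
    apply domSet_card hp2
    have h1 : n / p ^ (i+1) ≤ n := Nat.div_le_self _ _
    have h2 : n < p ^ (n+1) :=
      lt_of_lt_of_le (Nat.lt_pow_self (n := n) (a := p) (by omega)) (Nat.pow_le_pow_right (by omega) (by omega))
    omega
  rw [hdom]
  -- transform the product
  have hprod : (∏ σ ∈ Finset.range (n + 1), (digit p (n / p ^ (i+1)) σ + 1))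
      = ∏ σ ∈ Finset.Ico (i + 1) (n + 1), (digit p n σ + 1) := by
    rw [Finset.prod_Ico_eq_prod_range]
    have step1 : (∏ σ ∈ Finset.range (n + 1), (digit p (n / p ^ (i+1)) σ + 1))
        = ∏ σ ∈ Finset.range (n + 1), (digit p n (i + 1 + σ) + 1) := by
      apply Finset.prod_congr rfl
      intro σ _
      rw [digit_div_pow]
    rw [step1]
    symm
    apply Finset.prod_subset
    · apply Finset.range_subset_range.mpr
      omega
    · intro x _ hx
      rw [Finset.mem_range, not_lt] at hx
      have : digit p n (i + 1 + x) = 0 := digit_eq_zero_of_lt' hp2 (by omega)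
      rw [this]
      rfl
  rw [hprod, sum_digits_eq_mod hp2]
  have h9 : p ^ i - (n % p ^ i + 1) = p ^ i - 1 - n % p ^ i := by omega
  rw [h9]
  ring
end

section
/- Howard–Volodin theorem: For a prime p and m, t ∈ ℕ, the number of (m+1)-tuples (e_0,...,e_m) of non-negative integers with e_0 + ... + e_m = t such that the multinomial coefficient t!/(e_0!⋯e_m!) is divisible by p equals C(m+t, t) − Π_{σ∈ℕ} C(m + t_σ, t_σ), where t_σ are the base-p digits of t. -/
open Finset

private lemma sum_div_le_hv {n : ℕ} (e : Fin n → ℕ) (d : ℕ) (hd : 0 < d) :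
    ∑ i, e i / d ≤ (∑ i, e i) / d := by
  rw [Nat.le_div_iff_mul_le hd, Finset.sum_mul]
  exact Finset.sum_le_sum fun i _ => Nat.div_mul_le_self _ _

private lemma choose_flip_hv (x m : ℕ) : (x + m).choose x = (x + m).choose m := by
  rw [← Nat.choose_symm (Nat.le_add_left m x)]
  congr 1
  omega

/-- Stars and bars: cardinality of `antidiagonalTuple`. -/
private lemma card_adt_hv (m : ℕ) : ∀ n, (Finset.Nat.antidiagonalTuple (m + 1) n).card
    = (n + m).choose n := by
  induction m with
  | zero => intro n; simp
  | succ m ih =>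
    intro n
    have key : (Finset.Nat.antidiagonalTuple (m + 1 + 1) n).card
        = ((Finset.HasAntidiagonal.antidiagonal n).sigma fun x =>
            Finset.Nat.antidiagonalTuple (m + 1) x.2).card := by
      apply Finset.card_bij (fun e _ => ⟨(e 0, ∑ i, Fin.tail e i), Fin.tail e⟩)
      · intro e he
        rw [Finset.Nat.mem_antidiagonalTuple] at he
        rw [Finset.mem_sigma, Finset.HasAntidiagonal.mem_antidiagonal, Finset.Nat.mem_antidiagonalTuple]
        refine ⟨?_, rfl⟩
        show e 0 + ∑ i, Fin.tail e i = n
        rw [← he, Fin.sum_univ_succ e]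
        rfl
      · intro e₁ h₁ e₂ h₂ h
        obtain ⟨hfst, hsnd⟩ := Sigma.mk.inj_iff.mp h
        have h0 : e₁ 0 = e₂ 0 := congrArg Prod.fst hfst
        have ht : Fin.tail e₁ = Fin.tail e₂ := eq_of_heq hsnd
        funext i
        refine Fin.cases h0 (fun j => ?_) i
        exact congrFun ht j
      · rintro ⟨⟨a, b⟩, f⟩ hb
        rw [Finset.mem_sigma, Finset.HasAntidiagonal.mem_antidiagonal, Finset.Nat.mem_antidiagonalTuple] at hb
        obtain ⟨hab, hf⟩ := hb
        refine ⟨Fin.cons a f, ?_, ?_⟩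
        · rw [Finset.Nat.mem_antidiagonalTuple, Fin.sum_univ_succ, Fin.cons_zero]
          simp only [Fin.cons_succ]
          rw [hf, hab]
        · simp [Fin.tail_cons, hf]
    rw [key, Finset.card_sigma]
    have hrw1 : ∀ x ∈ Finset.HasAntidiagonal.antidiagonal n, (Finset.Nat.antidiagonalTuple (m + 1) x.2).card
        = (x.2 + m).choose m := fun x _ => (ih x.2).trans (choose_flip_hv x.2 m)
    rw [Finset.sum_congr rfl hrw1]
    rw [Finset.Nat.sum_antidiagonal_eq_sum_range_succ_mk]
    have hsum : ∑ k ∈ Finset.range (n + 1), ((n - k) + m).choose m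
        = ∑ k ∈ Finset.range (n + 1), (k + m).choose m := by
      rw [← Finset.sum_range_reflect (fun j => (j + m).choose m) (n + 1)]
      apply Finset.sum_congr rfl
      intro k hk
      rw [Finset.mem_range] at hk
      congr 2 <;> omega
    rw [hsum]
    have hIcc : ∑ j ∈ Finset.Icc m (n + m), j.choose m
        = ∑ k ∈ Finset.range (n + 1), (k + m).choose m := by
      rw [← Finset.Ico_add_one_right_eq_Icc, Finset.sum_Ico_eq_sum_range]
      have hn : n + m + 1 - m = n + 1 := by omega
      rw [hn]
      exact Finset.sum_congr rfl fun k _ => by rw [Nat.add_comm]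
    rw [← hIcc, Nat.sum_Icc_choose, choose_flip_hv n (m + 1)]
    congr 1 <;> omega

/-- Kummer-style characterization of non-divisibility of the multinomial coefficient. -/
private lemma notdvd_iff_hv (p : ℕ) (hp : p.Prime) {n t : ℕ} (e : Fin n → ℕ)
    (he : ∑ i, e i = t) :
    ¬ p ∣ Nat.multinomial Finset.univ e ↔ ∀ k, ∑ i, e i / p ^ k = t / p ^ k := by
  haveI : Fact p.Prime := ⟨hp⟩
  set b := Nat.log p t + 1 with hbdef
  have hbt : Nat.log p t < b := Nat.lt_succ_self _
  have htb : t < p ^ b := Nat.lt_pow_succ_log_self hp.one_lt t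
  have hei : ∀ i, e i ≤ t := fun i =>
    he ▸ Finset.single_le_sum (fun _ _ => Nat.zero_le _) (Finset.mem_univ i)
  have hlegt : padicValNat p t.factorial = ∑ k ∈ Finset.Ico 1 b, t / p ^ k :=
    padicValNat_factorial hbt
  have hlege : ∀ i, padicValNat p (e i).factorial = ∑ k ∈ Finset.Ico 1 b, e i / p ^ k := fun i =>
    padicValNat_factorial (lt_of_le_of_lt (Nat.log_mono_right (hei i)) hbt)
  have hspec := Nat.multinomial_spec Finset.univ e
  rw [he] at hspec
  have hprod_ne : (∏ i, (e i).factorial) ≠ 0 :=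
    Finset.prod_ne_zero_iff.mpr fun i _ => (Nat.factorial_pos _).ne'
  have hmult_ne : Nat.multinomial Finset.univ e ≠ 0 := (Nat.multinomial_pos _ _).ne'
  have hfac : t.factorial.factorization p
      = (∏ i, (e i).factorial).factorization p
        + (Nat.multinomial Finset.univ e).factorization p := by
    rw [← hspec, Nat.factorization_mul hprod_ne hmult_ne]
    simp
  have hνe : (∏ i, (e i).factorial).factorization p
      = ∑ k ∈ Finset.Ico 1 b, ∑ i, e i / p ^ k := by
    rw [Nat.factorization_prod fun i _ => (Nat.factorial_pos _).ne']
    rw [Finsupp.finset_sum_apply]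
    rw [Finset.sum_congr rfl fun i _ => (Nat.factorization_def _ hp).trans (hlege i)]
    rw [Finset.sum_comm]
  have hνt : t.factorial.factorization p = ∑ k ∈ Finset.Ico 1 b, t / p ^ k := by
    rw [Nat.factorization_def _ hp, hlegt]
  have hle : ∀ k ∈ Finset.Ico 1 b, ∑ i, e i / p ^ k ≤ t / p ^ k := fun k _ =>
    he ▸ sum_div_le_hv e (p ^ k) (pow_pos hp.pos k)
  have hkey : ¬ p ∣ Nat.multinomial Finset.univ e
      ↔ ∀ k ∈ Finset.Ico 1 b, ∑ i, e i / p ^ k = t / p ^ k := by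
    rw [hp.dvd_iff_one_le_factorization hmult_ne]
    constructor
    · intro h
      have h0 : (Nat.multinomial Finset.univ e).factorization p = 0 := by omega
      have heq : ∑ k ∈ Finset.Ico 1 b, ∑ i, e i / p ^ k
          = ∑ k ∈ Finset.Ico 1 b, t / p ^ k := by
        rw [← hνe, ← hνt, hfac, h0, add_zero]
      exact fun k hk => (Finset.sum_eq_sum_iff_of_le hle).mp heq k hk
    · intro h hge
      have heq : ∑ k ∈ Finset.Ico 1 b, ∑ i, e i / p ^ k
          = ∑ k ∈ Finset.Ico 1 b, t / p ^ k := Finset.sum_congr rfl h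
      rw [hνt, hνe, heq] at hfac
      omega
  rw [hkey]
  constructor
  · intro h k
    rcases Nat.eq_zero_or_pos k with rfl | hk
    · simpa using he
    rcases lt_or_ge k b with hkb | hkb
    · exact h k (Finset.mem_Ico.mpr ⟨hk, hkb⟩)
    · have hpk : t < p ^ k := lt_of_lt_of_le htb (Nat.pow_le_pow_right hp.pos hkb)
      rw [Nat.div_eq_of_lt hpk]
      exact Finset.sum_eq_zero fun i _ => Nat.div_eq_of_lt (lt_of_le_of_lt (hei i) hpk)
  · exact fun h k _ => h k

/-- The key counting lemma, by induction on the number of digits. -/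
private lemma count_hv (p : ℕ) (hp : p.Prime) (m : ℕ) : ∀ b t, t < p ^ b →
    ((Finset.Nat.antidiagonalTuple (m + 1) t).filter fun e =>
        ¬ p ∣ Nat.multinomial Finset.univ e).card
      = ∏ σ ∈ Finset.range b, Nat.choose (m + digit p t σ) (digit p t σ) := by
  intro b
  induction b with
  | zero =>
    intro t ht
    rw [pow_zero] at ht
    have ht0 : t = 0 := by omega
    subst ht0
    rw [Finset.Nat.antidiagonalTuple_zero_right, Finset.prod_range_zero, Finset.filter_singleton]
    have h1 : Nat.multinomial Finset.univ (0 : Fin (m+1) → ℕ) = 1 := by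
      have := Nat.multinomial_spec Finset.univ (0 : Fin (m+1) → ℕ)
      simpa using this
    rw [if_pos]
    · simp
    · rw [h1, Nat.dvd_one]
      exact hp.ne_one
  | succ b ih =>
    intro t ht
    set r := t % p with hr
    set q := t / p with hq
    have hrp : r < p := Nat.mod_lt _ hp.pos
    have hqb : q < p ^ b := by
      rw [hq, Nat.div_lt_iff_lt_mul hp.pos]
      calc t < p ^ (b + 1) := ht
        _ = p ^ b * p := by ring
    have htqr : p * q + r = t := Nat.div_add_mod t p
    have hrw : ∀ x : ℕ, x / p ^ (0 + 1) = x / p := fun x => by rw [pow_one]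
    have hrwk : ∀ (k : ℕ) (x : ℕ), x / p ^ (k + 1) = x / p / p ^ k := by
      intro k x
      rw [Nat.div_div_eq_div_mul, ← pow_succ']
    have key : ((Finset.Nat.antidiagonalTuple (m + 1) t).filter fun e =>
          ¬ p ∣ Nat.multinomial Finset.univ e).card
        = ((Finset.Nat.antidiagonalTuple (m + 1) r) ×ˢ
            ((Finset.Nat.antidiagonalTuple (m + 1) q).filter fun e =>
              ¬ p ∣ Nat.multinomial Finset.univ e)).card := by
      apply Finset.card_bij (fun e _ => ((fun i => e i % p), (fun i => e i / p)))
      · intro e hemem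
        rw [Finset.mem_filter, Finset.Nat.mem_antidiagonalTuple] at hemem
        obtain ⟨hsum, hnd⟩ := hemem
        have hgood := (notdvd_iff_hv p hp e hsum).mp hnd
        have hdiv1 : ∑ i, e i / p = q := by
          have h1 := hgood 1
          rw [pow_one] at h1
          exact h1
        have hmod : ∑ i, e i % p = r := by
          have h1 : ∑ i, e i = ∑ i, (p * (e i / p) + e i % p) := by
            exact Finset.sum_congr rfl fun i _ => (Nat.div_add_mod (e i) p).symm
          rw [Finset.sum_add_distrib, ← Finset.mul_sum, hdiv1, hsum] at h1
          omega
        rw [Finset.mem_product, Finset.Nat.mem_antidiagonalTuple, Finset.mem_filter,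
          Finset.Nat.mem_antidiagonalTuple]
        refine ⟨hmod, hdiv1, ?_⟩
        rw [notdvd_iff_hv p hp _ hdiv1]
        intro k
        have h2 := hgood (k + 1)
        simp only [hrwk k] at h2
        exact h2
      · intro e₁ h₁ e₂ h₂ h
        have h1 := congrArg Prod.fst h
        have h2 := congrArg Prod.snd h
        funext i
        have hm1 : e₁ i % p = e₂ i % p := congrFun h1 i
        have hd1 : e₁ i / p = e₂ i / p := congrFun h2 i
        rw [← Nat.div_add_mod (e₁ i) p, ← Nat.div_add_mod (e₂ i) p, hm1, hd1]
      · rintro ⟨g, f⟩ hgf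
        rw [Finset.mem_product, Finset.Nat.mem_antidiagonalTuple, Finset.mem_filter,
          Finset.Nat.mem_antidiagonalTuple] at hgf
        obtain ⟨hg, hf, hnd⟩ := hgf
        have hglt : ∀ i, g i < p := fun i =>
          lt_of_le_of_lt (hg ▸ Finset.single_le_sum (f := g) (fun _ _ => Nat.zero_le _)
            (Finset.mem_univ i)) hrp
        have hdivs : ∀ i, (p * f i + g i) / p = f i := fun i => by
          rw [Nat.mul_add_div hp.pos, Nat.div_eq_of_lt (hglt i), add_zero]
        have hmods : ∀ i, (p * f i + g i) % p = g i := fun i => by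
          rw [Nat.mul_add_mod, Nat.mod_eq_of_lt (hglt i)]
        have hsum : ∑ i, (p * f i + g i) = t := by
          rw [Finset.sum_add_distrib, ← Finset.mul_sum, hf, hg, htqr]
        refine ⟨fun i => p * f i + g i, ?_, ?_⟩
        · rw [Finset.mem_filter, Finset.Nat.mem_antidiagonalTuple]
          refine ⟨hsum, ?_⟩
          rw [notdvd_iff_hv p hp _ hsum]
          intro k
          rcases Nat.eq_zero_or_pos k with rfl | hk
          · simpa using hsum
          obtain ⟨k', rfl⟩ : ∃ k', k = k' + 1 := ⟨k - 1, by omega⟩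
          have hgoodf := (notdvd_iff_hv p hp f hf).mp hnd k'
          rw [hrwk k' t]
          have htp : t / p = q := rfl
          rw [htp, ← hgoodf]
          apply Finset.sum_congr rfl
          intro i _
          rw [hrwk k', hdivs i]
        · simp only [Prod.mk.injEq]
          exact ⟨funext fun i => hmods i, funext fun i => hdivs i⟩
    rw [key, Finset.card_product, card_adt_hv m r, ih q hqb]
    have hd0 : digit p t 0 = r := by
      show t / p ^ 0 % p = r
      rw [pow_zero, Nat.div_one]
    have hds : ∀ σ, digit p t (σ + 1) = digit p q σ := by
      intro σ
      show t / p ^ (σ + 1) % p = q / p ^ σ % p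
      rw [hq, Nat.div_div_eq_div_mul, ← pow_succ']
    rw [Finset.prod_range_succ' (fun σ => (m + digit p t σ).choose (digit p t σ)) b, hd0]
    have hprod : ∏ σ ∈ Finset.range b, (m + digit p t (σ + 1)).choose (digit p t (σ + 1))
        = ∏ σ ∈ Finset.range b, (m + digit p q σ).choose (digit p q σ) :=
      Finset.prod_congr rfl fun σ _ => by rw [hds σ]
    rw [hprod, Nat.mul_comm]
    congr 1
    rw [Nat.add_comm]

/-- **Howard–Volodin theorem**: the number of `(m+1)`-tuples `(e_0,…,e_m)` of
non-negative integers with `e_0 + ⋯ + e_m = t` whose multinomial coefficient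
`t!/(e_0!⋯e_m!)` is divisible by the prime `p` equals
`C(m+t,t) − ∏_σ C(m + t_σ, t_σ)`, where `t_σ` are the base-`p` digits of `t`.
(Digits with index `σ > t` vanish, and `C(m+0,0) = 1`, so the product over
`σ < t+1` is the full product.) -/
theorem howard_volodin (p : ℕ) (hp : p.Prime) (m t : ℕ) (hm : 1 ≤ m) :
    ((Finset.Nat.antidiagonalTuple (m + 1) t).filter fun e =>
        p ∣ Nat.multinomial Finset.univ e).card
      = Nat.choose (m + t) t -
          ∏ σ ∈ Finset.range (t + 1), Nat.choose (m + digit p t σ) (digit p t σ) := by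
  have htotal := Finset.card_filter_add_card_filter_not
    (s := Finset.Nat.antidiagonalTuple (m + 1) t)
    (p := fun e => p ∣ Nat.multinomial Finset.univ e)
  have hcard : (Finset.Nat.antidiagonalTuple (m + 1) t).card = (m + t).choose t := by
    rw [card_adt_hv m t, Nat.add_comm]
  have htb : t < p ^ (t + 1) :=
    lt_of_lt_of_le (Nat.lt_pow_self (n := t) hp.one_lt)
      (Nat.pow_le_pow_right hp.pos (Nat.le_succ t))
  have hneg := count_hv p hp m (t + 1) t htb
  omega
end

section
/- The number of (m+1)-tuples (e_0,...,e_m) of non-negative integers summing to t such that the multinomial coefficient t!/(e_0!⋯e_m!) is NOT divisible by a prime p equals Π_{σ∈ℕ} C(m + t_σ, t_σ), where t_σ are the base-p digits of t. -/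
open Finset Nat



lemma antidiagonalTuple_succ_eq (k n : ℕ) :
    Finset.Nat.antidiagonalTuple (k+1) n =
      (Finset.range (n+1)).biUnion fun j =>
        (Finset.Nat.antidiagonalTuple k j).map ⟨Fin.cons (n - j), Fin.cons_right_injective _⟩ := by
  ext x
  simp only [Finset.Nat.mem_antidiagonalTuple, Finset.mem_biUnion, Finset.mem_range,
    Finset.mem_map, Function.Embedding.coeFn_mk]
  constructor
  · intro hx
    rw [Fin.sum_univ_succ] at hx
    refine ⟨∑ i : Fin k, x i.succ, by omega, Fin.tail x, rfl, ?_⟩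
    have hh : n - ∑ i : Fin k, x i.succ = x 0 := by omega
    rw [hh, Fin.cons_self_tail]
  · rintro ⟨j, hj, y, hy, rfl⟩
    rw [Fin.sum_cons, hy]
    omega

lemma card_antidiagonalTuple_succ (k n : ℕ) :
    (Finset.Nat.antidiagonalTuple (k+1) n).card
      = ∑ j ∈ Finset.range (n+1), (Finset.Nat.antidiagonalTuple k j).card := by
  rw [antidiagonalTuple_succ_eq, Finset.card_biUnion]
  · simp
  · intro j hj j' hj' hne
    simp only [Finset.disjoint_left]
    rintro x hx hx'
    simp only [Finset.mem_map, Function.Embedding.coeFn_mk] at hx hx'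
    obtain ⟨y, hy, rfl⟩ := hx
    obtain ⟨y', hy', h⟩ := hx'
    have h2 := congrArg Fin.tail h
    rw [Fin.tail_cons, Fin.tail_cons] at h2
    subst h2
    rw [Finset.Nat.mem_antidiagonalTuple] at hy hy'
    omega

lemma sum_choose_add (k r : ℕ) :
    ∑ j ∈ Finset.range (r+1), (k + j).choose k = (k + 1 + r).choose r := by
  induction r with
  | zero => simp
  | succ r ih =>
    rw [Finset.sum_range_succ, ih]
    have h1 : (k + 1 + (r+1)).choose (r+1) = (k+1+r).choose r + (k+1+r).choose (r+1) := by
      rw [show k+1+(r+1) = (k+1+r)+1 by omega]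
      exact Nat.choose_succ_succ _ _
    have h2 : (k+1+r).choose (r+1) = (k + (r+1)).choose k := by
      rw [show k+1+r = (r+1) + k by omega, Nat.choose_symm_add, show r+1+k = k+(r+1) by omega]
    omega

lemma card_antidiagonalTuple (k r : ℕ) :
    (Finset.Nat.antidiagonalTuple (k+1) r).card = (k + r).choose r := by
  induction k generalizing r with
  | zero => simp
  | succ k ih =>
    rw [card_antidiagonalTuple_succ]
    simp_rw [ih]
    have : ∀ j, (k + j).choose j = (k + j).choose k := by
      intro j; rw [Nat.choose_symm_add]
    simp_rw [this]
    rw [sum_choose_add]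

lemma not_dvd_multinomial_iff {p : ℕ} (hp : p.Prime) {m t : ℕ} {e : Fin (m+1) → ℕ}
    (he : ∑ i, e i = t) :
    ¬ p ∣ Nat.multinomial Finset.univ e ↔ ∀ i, ∑ j, e j / p ^ i = t / p ^ i := by
  haveI : Fact p.Prime := ⟨hp⟩
  have hmul : (∏ i, (e i)!) * Nat.multinomial Finset.univ e = t ! := by
    rw [Nat.multinomial_spec, he]
  have he_le : ∀ j, e j ≤ t := by
    intro j; rw [← he]
    exact Finset.single_le_sum (fun i _ => Nat.zero_le _) (Finset.mem_univ j)
  -- valuations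
  have hval : padicValNat p (t !)
      = (∑ j, padicValNat p ((e j)!)) + padicValNat p (Nat.multinomial Finset.univ e) := by
    have hprod : padicValNat p (∏ i, (e i)!) = ∑ i, padicValNat p ((e i)!) := by
      have h := Nat.factorization_prod (S := Finset.univ)
        (g := fun i : Fin (m+1) => (e i)!) (fun i _ => (Nat.factorial_pos _).ne')
      have h2 := congrArg (fun f : ℕ →₀ ℕ => f p) h
      simpa [Nat.factorization_def _ hp, Finset.sum_apply'] using h2
    rw [← hmul, padicValNat.mul (Finset.prod_ne_zero_iff.mpr fun i _ => (Nat.factorial_pos _).ne')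
      (Nat.multinomial_pos _ _).ne', hprod]
  have hb : ∀ n : ℕ, n ≤ t → padicValNat p (n !) = ∑ i ∈ Finset.Ico 1 (t+1), n / p ^ i := by
    intro n hn
    exact padicValNat_factorial (lt_of_le_of_lt (Nat.log_mono_right hn)
      (Nat.lt_succ_of_le (Nat.log_le_self _ _)))
  have hterm : ∀ i : ℕ, ∑ j, e j / p ^ i ≤ t / p ^ i := by
    intro i
    rw [Nat.le_div_iff_mul_le (pow_pos hp.pos i), Finset.sum_mul, ← he]
    exact Finset.sum_le_sum fun j _ => Nat.div_mul_le_self _ _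
  have hzero : ∀ i : ℕ, t + 1 ≤ i → t / p ^ i = 0 ∧ ∀ j, e j / p ^ i = 0 := by
    intro i hi
    have h2 : t < p ^ i := by
      calc t < i := by omega
        _ < 2 ^ i := Nat.lt_two_pow_self
        _ ≤ p ^ i := Nat.pow_le_pow_left hp.two_le i
    exact ⟨Nat.div_eq_of_lt h2, fun j => Nat.div_eq_of_lt (lt_of_le_of_lt (he_le j) h2)⟩
  have hswap : ∑ j : Fin (m+1), padicValNat p ((e j)!)
      = ∑ i ∈ Finset.Ico 1 (t+1), ∑ j : Fin (m+1), e j / p ^ i := by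
    rw [Finset.sum_comm]
    exact Finset.sum_congr rfl fun j _ => hb _ (he_le j)
  have hts : padicValNat p (t !) = ∑ i ∈ Finset.Ico 1 (t+1), t / p ^ i := hb t le_rfl
  constructor
  · intro hnd i
    have hv0 : padicValNat p (Nat.multinomial Finset.univ e) = 0 :=
      padicValNat.eq_zero_of_not_dvd hnd
    have : ∑ i ∈ Finset.Ico 1 (t+1), ∑ j, e j / p ^ i
        = ∑ i ∈ Finset.Ico 1 (t+1), t / p ^ i := by omega
    have heach := (Finset.sum_eq_sum_iff_of_le (fun i _ => hterm i)).mp this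
    rcases Nat.eq_zero_or_pos i with rfl | hi1
    · simpa using he
    rcases le_or_gt (t+1) i with hbig | hsmall
    · obtain ⟨h1, h2⟩ := hzero i hbig
      rw [h1]; exact Finset.sum_eq_zero fun j _ => h2 j
    · exact heach i (Finset.mem_Ico.mpr ⟨hi1, hsmall⟩)
  · intro hall
    have hsum : ∑ i ∈ Finset.Ico 1 (t+1), ∑ j, e j / p ^ i
        = ∑ i ∈ Finset.Ico 1 (t+1), t / p ^ i :=
      Finset.sum_congr rfl fun i _ => hall i
    have hv0 : padicValNat p (Nat.multinomial Finset.univ e) = 0 := by omega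
    intro hdvd
    have := one_le_padicValNat_of_dvd (Nat.multinomial_pos _ _).ne' hdvd
    omega

lemma filter_card_step (p : ℕ) (hp : p.Prime) (m t : ℕ) :
    ((Finset.Nat.antidiagonalTuple (m + 1) t).filter fun e =>
        ¬ p ∣ Nat.multinomial Finset.univ e).card
    = (Finset.Nat.antidiagonalTuple (m + 1) (t % p)).card *
      ((Finset.Nat.antidiagonalTuple (m + 1) (t / p)).filter fun e =>
        ¬ p ∣ Nat.multinomial Finset.univ e).card := by
  rw [← Finset.card_product]
  apply Finset.card_nbij' (i := fun e => (fun i => e i % p, fun i => e i / p))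
      (j := fun ab => fun i => ab.1 i + p * ab.2 i)
  · intro e he
    rw [Finset.mem_coe, Finset.mem_filter, Finset.Nat.mem_antidiagonalTuple] at he
    obtain ⟨hsum, hnd⟩ := he
    have cond := (not_dvd_multinomial_iff hp hsum).mp hnd
    have h1 : ∑ j, e j / p = t / p := by simpa using cond 1
    have hm : ∑ j, e j % p = t % p := by
      have h2 : ∑ j, (e j % p + p * (e j / p)) = t := by
        simp only [Nat.mod_add_div]; exact hsum
      rw [Finset.sum_add_distrib, ← Finset.mul_sum, h1] at h2
      have := Nat.mod_add_div t p
      omega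
    rw [Finset.mem_coe, Finset.mem_product, Finset.Nat.mem_antidiagonalTuple, Finset.mem_filter,
      Finset.Nat.mem_antidiagonalTuple]
    refine ⟨hm, h1, ?_⟩
    rw [not_dvd_multinomial_iff hp h1]
    intro i
    simp only [Nat.div_div_eq_div_mul, ← pow_succ']
    exact cond (i+1)
  · rintro ⟨a, b⟩ hab
    rw [Finset.mem_coe, Finset.mem_product, Finset.Nat.mem_antidiagonalTuple, Finset.mem_filter,
      Finset.Nat.mem_antidiagonalTuple] at hab
    obtain ⟨ha, hb, hnd⟩ := hab
    have cond := (not_dvd_multinomial_iff hp hb).mp hnd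
    have haj : ∀ j, a j < p := fun j =>
      lt_of_le_of_lt (ha ▸ Finset.single_le_sum (fun i _ => Nat.zero_le _) (Finset.mem_univ j))
        (Nat.mod_lt t hp.pos)
    have hsum : ∑ j, (a j + p * b j) = t := by
      rw [Finset.sum_add_distrib, ← Finset.mul_sum, ha, hb, Nat.mod_add_div]
    rw [Finset.mem_coe, Finset.mem_filter, Finset.Nat.mem_antidiagonalTuple]
    refine ⟨hsum, ?_⟩
    rw [not_dvd_multinomial_iff hp hsum]
    intro i
    cases i with
    | zero => simpa using hsum
    | succ i =>
      have hdiv : ∀ j, (a j + p * b j) / p ^ (i+1) = b j / p ^ i := by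
        intro j
        rw [pow_succ', ← Nat.div_div_eq_div_mul, Nat.add_mul_div_left _ _ hp.pos,
          Nat.div_eq_of_lt (haj j), zero_add]
      calc ∑ j, (a j + p * b j) / p ^ (i+1) = ∑ j, b j / p ^ i :=
            Finset.sum_congr rfl fun j _ => hdiv j
        _ = t / p / p ^ i := cond i
        _ = t / p ^ (i+1) := by rw [pow_succ', Nat.div_div_eq_div_mul]
  · intro e he
    funext i
    simp [Nat.mod_add_div]
  · rintro ⟨a, b⟩ hab
    rw [Finset.mem_coe, Finset.mem_product, Finset.Nat.mem_antidiagonalTuple] at hab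
    obtain ⟨ha, _⟩ := hab
    have haj : ∀ j, a j < p := fun j =>
      lt_of_le_of_lt (ha ▸ Finset.single_le_sum (fun i _ => Nat.zero_le _) (Finset.mem_univ j))
        (Nat.mod_lt t hp.pos)
    refine Prod.ext (funext fun i => ?_) (funext fun i => ?_)
    · simp [Nat.add_mul_mod_self_left, Nat.mod_eq_of_lt (haj i)]
    · simp [Nat.add_mul_div_left _ _ hp.pos, Nat.div_eq_of_lt (haj i)]

lemma prod_digit_step (p : ℕ) (hp : p.Prime) (m t : ℕ) (ht : 0 < t) :
    ∏ σ ∈ Finset.range (t + 1), (m + digit p t σ).choose (digit p t σ)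
    = (m + t % p).choose (t % p) *
      ∏ σ ∈ Finset.range (t / p + 1), (m + digit p (t/p) σ).choose (digit p (t/p) σ) := by
  have h0 : digit p t 0 = t % p := by simp [digit]
  have hsh : ∀ σ, digit p t (σ+1) = digit p (t/p) σ := by
    intro σ; simp [digit, Nat.div_div_eq_div_mul, ← pow_succ']
  rw [Finset.prod_range_succ']
  simp_rw [hsh, h0]
  rw [mul_comm]
  congr 1
  symm
  apply Finset.prod_subset
  · apply Finset.range_subset_range.mpr
    have := Nat.div_lt_self ht hp.one_lt
    omega
  · intro σ hσ hnσ
    rw [Finset.mem_range] at hσ hnσ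
    have hd : digit p (t/p) σ = 0 := by
      have h2 : t / p < p ^ σ := by
        calc t / p < σ := by omega
          _ < 2 ^ σ := Nat.lt_two_pow_self
          _ ≤ p ^ σ := Nat.pow_le_pow_left hp.two_le σ
      simp [digit, Nat.div_eq_of_lt h2]
    simp [hd]

/-- The number of `(m+1)`-tuples `(e_0,…,e_m)` of non-negative integers summing to `t`
whose multinomial coefficient `t!/(e_0!⋯e_m!)` is NOT divisible by the prime `p` equals
`∏_σ C(m + t_σ, t_σ)`, where `t_σ` are the base-`p` digits of `t`. (Digits with index
`σ > t` vanish, and `C(m+0,0) = 1`, so the product over `σ < t+1` is the full product.) -/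
theorem card_multinomial_not_dvd (p : ℕ) (hp : p.Prime) (m t : ℕ) (hm : 1 ≤ m) :
    ((Finset.Nat.antidiagonalTuple (m + 1) t).filter fun e =>
        ¬ p ∣ Nat.multinomial Finset.univ e).card
      = ∏ σ ∈ Finset.range (t + 1), Nat.choose (m + digit p t σ) (digit p t σ) := by
  induction t using Nat.strong_induction_on with
  | _ t ih =>
  rcases Nat.eq_zero_or_pos t with rfl | ht
  · have h1 : Nat.multinomial (Finset.univ : Finset (Fin (m+1))) 0 = 1 := by
      simp [Nat.multinomial]
    rw [Finset.Nat.antidiagonalTuple_zero_right]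
    have hd : digit p 0 0 = 0 := by simp [digit]
    rw [Finset.filter_singleton]
    simp [h1, hp.one_lt.ne', hd, Nat.Prime.one_lt hp]
  · have hdiv : t / p < t := Nat.div_lt_self ht hp.one_lt
    rw [filter_card_step p hp m t, ih _ hdiv, card_antidiagonalTuple,
      prod_digit_step p hp m t ht]
end

section
/- If F is a field of characteristic 0, then for every n ≥ 2 and every k ∈ {-1, 0, ..., n-1}, the k-nucleus of the normal rational curve V_1^n in P(F^{n+1}) is empty. Equivalently, the intersection over all u ∈ F of the linear span of the first k+1 osculating columns (1, C(1,0)u, C(2,0)u², ..., C(n,0)uⁿ), ..., i.e. of the k-osculating subspaces at all points of the curve, is the zero subspace. -/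
/-- The `k`-osculating subspace (here parametrized by `c = k+1`, the number of spanning
columns) of the normal rational curve `x ↦ (1, x, …, xⁿ)` in `F^{n+1}` at the point with
parameter `u`: the span of the first `c` columns of the matrix with entries
`C(r,s) u^{r−s}` (`0 ≤ s ≤ r ≤ n`), i.e. of the point and its first `c-1`
Hasse-derivative points. -/
def oscSub (F : Type) [Field F] (n : ℕ) (u : F) (c : ℕ) : Submodule F (Fin (n + 1) → F) :=
  Submodule.span F
    (Set.range fun s : Fin c => fun r : Fin (n + 1) => (r.1.choose s.1 : F) * u ^ (r.1 - s.1))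

/-- The `k`-osculating subspace (with `c = k+1`) at the point `u = ∞` of the curve:
the span of the last `c` standard basis vectors `e_n, …, e_{n-c+1}`. -/
def oscInfty (F : Type) [Field F] (n c : ℕ) : Submodule F (Fin (n + 1) → F) :=
  Submodule.span F {v | ∃ i : Fin (n + 1), n + 1 ≤ i.1 + c ∧ v = Pi.single i 1}

/-- The `k`-nucleus (with `c = k+1`) of the normal rational curve: the intersection of
all its `k`-osculating subspaces. -/
def nucleus (F : Type) [Field F] (n c : ℕ) : Submodule F (Fin (n + 1) → F) :=
  (⨅ u : F, oscSub F n u c) ⊓ oscInfty F n c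

/-- Key identity: for `t < r`,
`∑_{s=0}^{r} C(r,s)(-u)^{r-s} · C(s,t) u^{s-t} = 0`. -/
lemma osc_key (F : Type) [Field F] (u : F) (t r : ℕ) (h : t < r) :
    ∑ s ∈ Finset.range (r + 1),
      (r.choose s : F) * (-u) ^ (r - s) * ((s.choose t : F) * u ^ (s - t)) = 0 := by
  have ht : t ≤ r := h.le
  have h1 : ∑ s ∈ Finset.range (r + 1),
      (r.choose s : F) * (-u) ^ (r - s) * ((s.choose t : F) * u ^ (s - t))
      = ∑ s ∈ Finset.Ico t (r + 1),
      (r.choose s : F) * (-u) ^ (r - s) * ((s.choose t : F) * u ^ (s - t)) := by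
    rw [Finset.range_eq_Ico, ← Finset.sum_Ico_consecutive _ (Nat.zero_le t) (by omega)]
    have : ∑ s ∈ Finset.Ico 0 t,
        (r.choose s : F) * (-u) ^ (r - s) * ((s.choose t : F) * u ^ (s - t)) = 0 := by
      apply Finset.sum_eq_zero
      intro s hs
      simp only [Finset.mem_Ico] at hs
      rw [Nat.choose_eq_zero_of_lt hs.2]
      simp
    rw [this, zero_add]
  rw [h1, Finset.sum_Ico_eq_sum_range]
  have h2 : r + 1 - t = (r - t) + 1 := by omega
  rw [h2]
  set m := r - t with hm
  have h3 : ∀ j ∈ Finset.range (m + 1),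
      (r.choose (t + j) : F) * (-u) ^ (r - (t + j)) * (((t + j).choose t : F) * u ^ (t + j - t))
      = (r.choose t : F) * (u ^ j * (-u) ^ (m - j) * (m.choose j : F)) := by
    intro j hj
    simp only [Finset.mem_range] at hj
    have hj' : j ≤ m := by omega
    have e1 : r - (t + j) = m - j := by omega
    have e2 : t + j - t = j := by omega
    have e3 : (r.choose (t + j) : F) * ((t + j).choose t : F)
        = (r.choose t : F) * (m.choose j : F) := by
      have := Nat.choose_mul (n := r) (show t ≤ t + j by omega)
      have e4 : r - t = m := hm.symm
      have e5 : t + j - t = j := by omega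
      rw [e4, e5] at this
      exact_mod_cast congrArg (fun x : ℕ => (x : F)) this
    rw [e1, e2]
    calc (r.choose (t + j) : F) * (-u) ^ (m - j) * (((t + j).choose t : F) * u ^ j)
        = ((r.choose (t + j) : F) * ((t + j).choose t : F)) * ((-u) ^ (m - j) * u ^ j) := by
          ring
      _ = ((r.choose t : F) * (m.choose j : F)) * ((-u) ^ (m - j) * u ^ j) := by rw [e3]
      _ = (r.choose t : F) * (u ^ j * (-u) ^ (m - j) * (m.choose j : F)) := by ring
  rw [Finset.sum_congr rfl h3, ← Finset.mul_sum, ← add_pow u (-u) m]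
  have : u + -u = 0 := by ring
  rw [this, zero_pow (by omega : m ≠ 0), mul_zero]

/-- Any vector in the `k`-osculating subspace at `u` is annihilated by the linear
functionals `w ↦ ∑ₛ C(r,s)(-u)^{r-s} wₛ` for rows `r ≥ c`. -/
lemma osc_ortho (F : Type) [Field F] (n : ℕ) (u : F) (c : ℕ) (v : Fin (n + 1) → F)
    (hv : v ∈ oscSub F n u c) (r : Fin (n + 1)) (hr : c ≤ r.1) :
    ∑ s : Fin (n + 1), (r.1.choose s.1 : F) * (-u) ^ (r.1 - s.1) * v s = 0 := by
  let φ : (Fin (n + 1) → F) →ₗ[F] F :=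
    { toFun := fun w => ∑ s : Fin (n + 1), (r.1.choose s.1 : F) * (-u) ^ (r.1 - s.1) * w s
      map_add' := by intro a b; simp [mul_add, Finset.sum_add_distrib]
      map_smul' := by
        intro m a
        simp only [Pi.smul_apply, smul_eq_mul, RingHom.id_apply, Finset.mul_sum]
        exact Finset.sum_congr rfl fun s _ => by ring }
  suffices h : oscSub F n u c ≤ LinearMap.ker φ from h hv
  rw [oscSub, Submodule.span_le]
  rintro _ ⟨t, rfl⟩
  simp only [SetLike.mem_coe, LinearMap.mem_ker, φ, LinearMap.coe_mk, AddHom.coe_mk]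
  have hconv : ∑ s : Fin (n + 1),
      (r.1.choose s.1 : F) * (-u) ^ (r.1 - s.1) * ((s.1.choose t.1 : F) * u ^ (s.1 - t.1))
      = ∑ s ∈ Finset.range (n + 1),
      (r.1.choose s : F) * (-u) ^ (r.1 - s) * ((s.choose t.1 : F) * u ^ (s - t.1)) :=
    Fin.sum_univ_eq_sum_range
      (fun s => (r.1.choose s : F) * (-u) ^ (r.1 - s) * ((s.choose t.1 : F) * u ^ (s - t.1)))
      (n + 1)
  rw [hconv]
  have hsub : Finset.range (r.1 + 1) ⊆ Finset.range (n + 1) := by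
    apply Finset.range_subset_range.mpr; omega
  rw [← Finset.sum_subset hsub (by
    intro s _ hs
    simp only [Finset.mem_range, not_lt] at hs
    rw [Nat.choose_eq_zero_of_lt (by omega : r.1 < s)]
    simp)]
  exact osc_key F u t.1 r.1 (lt_of_lt_of_le t.2 hr)

/-- Over a field of characteristic `0`, for every `n ≥ 2` and every
`k ∈ {-1, 0, …, n-1}` (i.e. `c = k+1 ∈ {0, …, n}`), the `k`-nucleus of the normal
rational curve `V_1^n` is empty (the zero subspace). -/
theorem nucleus_eq_bot_of_charZero (F : Type) [Field F] [CharZero F] (n c : ℕ)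
    (hn : 2 ≤ n) (hc : c ≤ n) :
    nucleus F n c = ⊥ := by
  rw [eq_bot_iff]
  intro v hv
  have hv1 : ∀ u : F, v ∈ oscSub F n u c := fun u =>
    (Submodule.mem_iInf _).mp (Submodule.mem_inf.mp hv).1 u
  have heq : ∀ w : F, ∑ s : Fin (n + 1), (n.choose s.1 : F) * w ^ (n - s.1) * v s = 0 := by
    intro w
    have h := osc_ortho F n (-w) c v (hv1 (-w)) ⟨n, Nat.lt_succ_self n⟩ hc
    simpa using h
  set P : Polynomial F :=
    ∑ s : Fin (n + 1), Polynomial.C ((n.choose s.1 : F) * v s) * Polynomial.X ^ (n - s.1)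
    with hP
  have hPeval : ∀ w : F, P.eval w = 0 := by
    intro w
    rw [hP, Polynomial.eval_finset_sum]
    simp only [Polynomial.eval_mul, Polynomial.eval_C, Polynomial.eval_pow, Polynomial.eval_X]
    rw [← heq w]
    exact Finset.sum_congr rfl fun s _ => by ring
  have hP0 : P = 0 := Polynomial.funext fun w => by rw [hPeval w, Polynomial.eval_zero]
  have hvz : ∀ s : Fin (n + 1), v s = 0 := by
    intro s₀
    have hco := congrArg (fun p => Polynomial.coeff p (n - s₀.1)) hP0
    simp only [Polynomial.coeff_zero] at hco
    rw [hP, Polynomial.finset_sum_coeff] at hco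
    simp only [Polynomial.coeff_C_mul, Polynomial.coeff_X_pow] at hco
    rw [Finset.sum_eq_single s₀ (fun s _ hs => by
        have h1 : s.1 ≤ n := by omega
        have h2 : s₀.1 ≤ n := by omega
        have : ¬ (n - s₀.1 = n - s.1) := fun h => hs (Fin.ext (by omega))
        simp [this]) (fun h => absurd (Finset.mem_univ s₀) h)] at hco
    simp only [eq_self_iff_true, if_true, mul_one] at hco
    have hch : (n.choose s₀.1 : F) ≠ 0 := by
      exact_mod_cast Nat.cast_ne_zero.mpr (Nat.choose_pos (by omega : s₀.1 ≤ n)).ne'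
    exact (mul_eq_zero.mp hco).resolve_left hch
  simpa [Submodule.mem_bot] using (funext hvz : v = 0)
end

section
/- Let F be a field with at least k+1 elements and let c_0,...,c_n be the standard basis of F^{n+1}. The k-nucleus of the normal rational curve V_1^n (i.e. the intersection of all k-osculating subspaces) equals the linear span of those basis vectors c_j with index j ∈ {0,...,n} satisfying C(k+1, j) ≡ C(k+2, j) ≡ ... ≡ C(n, j) ≡ 0 modulo char F. -/
section Aux

variable {F : Type} [Field F]

/-- The "Pascal" matrix of the curve at parameter `u`. -/
def pasc (F : Type) [Field F] (n : ℕ) (u : F) : Matrix (Fin (n + 1)) (Fin (n + 1)) F :=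
  Matrix.of fun s r => (s.1.choose r.1 : F) * u ^ (s.1 - r.1)

/-- Key convolution identity for the entries of `pasc`. -/
lemma key_sum (u v : F) {N s r : ℕ} (hs : s < N) :
    ∑ t ∈ Finset.range N,
        ((s.choose t : F) * u ^ (s - t)) * ((t.choose r : F) * v ^ (t - r)) =
      (s.choose r : F) * (u + v) ^ (s - r) := by
  by_cases hrs : r ≤ s
  · have hsub : Finset.Ico r (s + 1) ⊆ Finset.range N := by
      intro x hx
      simp only [Finset.mem_Ico] at hx
      simp only [Finset.mem_range]
      omega
    rw [← Finset.sum_subset hsub]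
    · rw [Finset.sum_Ico_eq_sum_range]
      have hd : s + 1 - r = (s - r) + 1 := by omega
      rw [hd]
      have hbin : (u + v) ^ (s - r) = ∑ i ∈ Finset.range ((s - r) + 1),
          v ^ i * u ^ ((s - r) - i) * ((s - r).choose i : F) := by
        rw [add_comm u v]
        exact add_pow v u (s - r)
      rw [hbin, Finset.mul_sum]
      refine Finset.sum_congr rfl ?_
      intro i hi
      simp only [Finset.mem_range] at hi
      have hi' : i ≤ s - r := by omega
      have h1 : r + i - r = i := by omega
      have h2 : s - (r + i) = (s - r) - i := by omega
      have hki : r + i ≤ s := by omega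
      have hcc : s.choose (r + i) * (r + i).choose r = s.choose r * (s - r).choose i := by
        have := Nat.choose_mul (n := s) (k := r + i) (s := r) (Nat.le_add_right r i)
        rwa [Nat.add_sub_cancel_left] at this
      rw [h1, h2]
      have : ((s.choose (r + i) : F)) * ((r + i).choose r : F) =
          (s.choose r : F) * ((s - r).choose i : F) := by
        exact_mod_cast congrArg (Nat.cast (R := F)) hcc
      calc (s.choose (r + i) : F) * u ^ (s - r - i) * (((r + i).choose r : F) * v ^ i)
          = ((s.choose (r + i) : F) * ((r + i).choose r : F)) * (u ^ (s - r - i) * v ^ i) := by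
            ring
        _ = ((s.choose r : F) * ((s - r).choose i : F)) * (u ^ (s - r - i) * v ^ i) := by
            rw [this]
        _ = (s.choose r : F) * (v ^ i * u ^ (s - r - i) * ((s - r).choose i : F)) := by
            ring
    · intro t ht hnt
      simp only [Finset.mem_Ico, not_and_or, not_le, not_lt] at hnt
      rcases hnt with h | h
      · have : t.choose r = 0 := Nat.choose_eq_zero_of_lt h
        simp [this]
      · have : s.choose t = 0 := Nat.choose_eq_zero_of_lt (by omega)
        simp [this]
  · push_neg at hrs
    have h0 : s.choose r = 0 := Nat.choose_eq_zero_of_lt hrs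
    rw [h0]
    simp only [Nat.cast_zero, zero_mul]
    refine Finset.sum_eq_zero ?_
    intro t _
    by_cases hts : t ≤ s
    · have : t.choose r = 0 := Nat.choose_eq_zero_of_lt (by omega)
      simp [this]
    · have : s.choose t = 0 := Nat.choose_eq_zero_of_lt (by omega)
      simp [this]

lemma pasc_mul (n : ℕ) (u v : F) : pasc F n u * pasc F n v = pasc F n (u + v) := by
  ext s r
  rw [Matrix.mul_apply]
  show ∑ t : Fin (n + 1),
      ((s.1.choose t.1 : F) * u ^ (s.1 - t.1)) * ((t.1.choose r.1 : F) * v ^ (t.1 - r.1)) = _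
  rw [Fin.sum_univ_eq_sum_range
    (fun t => ((s.1.choose t : F) * u ^ (s.1 - t)) * ((t.choose r.1 : F) * v ^ (t - r.1)))]
  exact key_sum u v s.isLt

lemma pasc_zero (n : ℕ) : pasc F n (0 : F) = 1 := by
  ext s r
  show (s.1.choose r.1 : F) * (0 : F) ^ (s.1 - r.1) = (1 : Matrix _ _ F) s r
  rw [Matrix.one_apply]
  rcases lt_trichotomy s.1 r.1 with h | h | h
  · have : s.1.choose r.1 = 0 := Nat.choose_eq_zero_of_lt h
    have hne : s ≠ r := fun hsr => by omega
    simp [this, hne]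
  · have : s = r := Fin.ext h
    simp [this, h]
  · have hne : s ≠ r := fun hsr => by rw [hsr] at h; omega
    have hpos : s.1 - r.1 ≠ 0 := by omega
    simp [hne, zero_pow hpos]

/-- The submodule of vectors supported on a set of coordinates. -/
def coordSub (n : ℕ) (J : Set (Fin (n + 1))) : Submodule F (Fin (n + 1) → F) where
  carrier := {w | ∀ r, r ∉ J → w r = 0}
  add_mem' := fun ha hb r hr => by simp [ha r hr, hb r hr]
  zero_mem' := fun r _ => rfl
  smul_mem' := fun a w hw r hr => by simp [hw r hr]

lemma mem_coordSub {n : ℕ} {J : Set (Fin (n + 1))} {w : Fin (n + 1) → F} :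
    w ∈ (coordSub n J : Submodule F (Fin (n + 1) → F)) ↔ ∀ r, r ∉ J → w r = 0 := Iff.rfl

lemma span_single_eq (n : ℕ) (P : Fin (n + 1) → Prop) :
    Submodule.span F {v | ∃ j : Fin (n + 1), P j ∧ v = Pi.single j 1} =
      coordSub n {j | P j} := by
  apply le_antisymm
  · rw [Submodule.span_le]
    rintro v ⟨j, hj, rfl⟩
    intro r hr
    have : r ≠ j := fun h => hr (h ▸ hj)
    exact Pi.single_eq_of_ne this 1
  · intro w hw
    have hrepr : w = ∑ r : Fin (n + 1), w r • (Pi.single r 1 : Fin (n + 1) → F) := by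
      funext i
      rw [Finset.sum_apply]
      simp [Pi.single_apply]
    rw [hrepr]
    refine Submodule.sum_mem _ ?_
    intro r _
    by_cases hr : P r
    · exact Submodule.smul_mem _ _ (Submodule.subset_span ⟨r, hr, rfl⟩)
    · have : w r = 0 := hw r hr
      rw [this, zero_smul]
      exact Submodule.zero_mem _

lemma oscInfty_eq (n c : ℕ) :
    oscInfty F n c = coordSub n {i : Fin (n + 1) | n + 1 ≤ i.1 + c} :=
  span_single_eq n (fun i => n + 1 ≤ i.1 + c)

lemma oscSub_eq (n : ℕ) (u : F) (c : ℕ) (hc : c ≤ n) :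
    oscSub F n u c =
      Submodule.comap (pasc F n (-u)).mulVecLin
        (coordSub n {s : Fin (n + 1) | s.1 < c}) := by
  apply le_antisymm
  · rw [oscSub, Submodule.span_le]
    rintro v ⟨s, rfl⟩
    intro t ht
    simp only [Set.mem_setOf_eq, not_lt] at ht
    show ((pasc F n (-u)).mulVec _) t = 0
    have : ((pasc F n (-u)).mulVec fun r : Fin (n + 1) =>
        (r.1.choose s.1 : F) * u ^ (r.1 - s.1)) t =
        ∑ r : Fin (n + 1),
          ((t.1.choose r.1 : F) * (-u) ^ (t.1 - r.1)) *
            ((r.1.choose s.1 : F) * u ^ (r.1 - s.1)) := by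
      simp [Matrix.mulVec, dotProduct, pasc]
    rw [this, Fin.sum_univ_eq_sum_range
      (fun r => ((t.1.choose r : F) * (-u) ^ (t.1 - r)) * ((r.choose s.1 : F) * u ^ (r - s.1))),
      key_sum (-u) u t.isLt, neg_add_cancel]
    have hpos : t.1 - s.1 ≠ 0 := by have := s.isLt; omega
    rw [zero_pow hpos, mul_zero]
  · intro v hv
    rw [Submodule.mem_comap] at hv
    set w := (pasc F n (-u)).mulVec v with hw
    have hvw : v = (pasc F n u).mulVec w := by
      rw [hw, Matrix.mulVec_mulVec, pasc_mul, add_neg_cancel, pasc_zero, Matrix.one_mulVec]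
    have hsum : v = ∑ s : Fin (n + 1),
        w s • (fun r : Fin (n + 1) => (r.1.choose s.1 : F) * u ^ (r.1 - s.1)) := by
      rw [hvw]
      funext r
      simp only [Matrix.mulVec, dotProduct, pasc, Matrix.of_apply, Finset.sum_apply,
        Pi.smul_apply, smul_eq_mul]
      exact Finset.sum_congr rfl fun s _ => mul_comm _ _
    rw [hsum]
    refine Submodule.sum_mem _ ?_
    intro s _
    by_cases hs : s.1 < c
    · exact Submodule.smul_mem _ _ (Submodule.subset_span ⟨⟨s.1, hs⟩, rfl⟩)
    · have : w s = 0 := hv s hs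
      rw [this, zero_smul]
      exact Submodule.zero_mem _

/-- The digitwise-max construction giving a binomial coefficient not divisible by `p`. -/
lemma exists_not_dvd {p : ℕ} (hp : p.Prime) :
    ∀ j c : ℕ, ∃ m, c ≤ m ∧ m ≤ j + c ∧ ¬ p ∣ m.choose j := by
  haveI := Fact.mk hp
  intro j
  induction j using Nat.strong_induction_on with
  | _ j IH =>
    intro c
    rcases Nat.eq_zero_or_pos j with rfl | hj
    · exact ⟨c, le_refl c, by omega, by simpa using hp.one_lt.ne'⟩
    · obtain ⟨m', h1, h2, h3⟩ := IH (j / p) (Nat.div_lt_self hj hp.one_lt) (c / p)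
      have hpp : 0 < p := hp.pos
      have hjmod : j % p < p := Nat.mod_lt j hpp
      have hcmod : c % p < p := Nat.mod_lt c hpp
      set x := max (j % p) (c % p) with hx
      have hxp : x < p := by omega
      refine ⟨p * m' + x, ?_, ?_, ?_⟩
      · have hc' : p * (c / p) + c % p = c := Nat.div_add_mod c p
        have := Nat.mul_le_mul_left p h1
        omega
      · have hj' : p * (j / p) + j % p = j := Nat.div_add_mod j p
        have hc' : p * (c / p) + c % p = c := Nat.div_add_mod c p
        have hm : p * m' ≤ p * (j / p) + p * (c / p) := by
          rw [← Nat.mul_add]; exact Nat.mul_le_mul_left p h2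
        omega
      · intro hdvd
        have hmod : (p * m' + x) % p = x := by
          rw [Nat.mul_add_mod, Nat.mod_eq_of_lt hxp]
        have hdiv : (p * m' + x) / p = m' := by
          rw [Nat.mul_add_div hpp, Nat.div_eq_of_lt hxp, Nat.add_zero]
        have hl := Choose.choose_modEq_choose_mod_mul_choose_div_nat
          (p := p) (n := p * m' + x) (k := j)
        rw [hmod, hdiv] at hl
        have hdvd2 : p ∣ x.choose (j % p) * m'.choose (j / p) :=
          (Nat.modEq_zero_iff_dvd).mp
            (hl.symm.trans ((Nat.modEq_zero_iff_dvd).mpr hdvd))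
        rcases (Nat.Prime.dvd_mul hp).mp hdvd2 with h | h
        · have hfac : x.choose (j % p) ∣ Nat.factorial x :=
            ⟨Nat.factorial (j % p) * Nat.factorial (x - j % p), by
              rw [← Nat.mul_assoc,
                Nat.choose_mul_factorial_mul_factorial (le_max_left _ _)]⟩
          have := (Nat.Prime.dvd_factorial hp).mp (h.trans hfac)
          omega
        · exact h3 h

lemma lucas_contra (F : Type) [Field F] {j c n : ℕ} (hjc : j + c ≤ n)
    (hcond : ∀ m, c ≤ m → m ≤ n → ((m.choose j : F)) = 0) : False := by
  haveI := ringChar.charP F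
  rcases CharP.char_is_prime_or_zero F (ringChar F) with hp | h0
  · obtain ⟨m, h1, h2, h3⟩ := exists_not_dvd hp j c
    exact h3 ((CharP.cast_eq_zero_iff F (ringChar F) _).mp (hcond m h1 (by omega)))
  · haveI : CharP F 0 := h0 ▸ ringChar.charP F
    haveI : CharZero F := CharP.charP_to_charZero F
    have h := hcond (max j c) (le_max_right _ _) (by omega)
    have : (max j c).choose j = 0 := Nat.cast_eq_zero.mp h
    have := Nat.choose_pos (le_max_left j c)
    omega

end Aux

/-- If `#F ≥ k+1` (i.e. `#F ≥ c` with `c = k+1`), the `k`-nucleus of the normal rational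
curve equals the span of those standard basis vectors `c_j` with
`C(k+1,j) ≡ C(k+2,j) ≡ … ≡ C(n,j) ≡ 0 mod char F` (vanishing of the binomial
coefficients in `F`). -/
theorem nucleus_eq_span (F : Type) [Field F] (n c : ℕ) (hn : 2 ≤ n) (hc : c ≤ n)
    (hF : (c : Cardinal) ≤ Cardinal.mk F) :
    nucleus F n c = Submodule.span F
      {v | ∃ j : Fin (n + 1),
        (∀ m : ℕ, c ≤ m → m ≤ n → (Nat.choose m j.1 : F) = 0) ∧ v = Pi.single j 1} := by
  rw [show Submodule.span F
      {v | ∃ j : Fin (n + 1),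
        (∀ m : ℕ, c ≤ m → m ≤ n → (Nat.choose m j.1 : F) = 0) ∧ v = Pi.single j 1} =
      coordSub n {j : Fin (n + 1) | ∀ m : ℕ, c ≤ m → m ≤ n → (Nat.choose m j.1 : F) = 0} from
    span_single_eq n _]
  apply le_antisymm
  · -- hard direction: nucleus ≤ coordSub
    intro v hv
    rw [nucleus, Submodule.mem_inf, Submodule.mem_iInf] at hv
    obtain ⟨h1, h2⟩ := hv
    have h1' : ∀ u : F, ∀ t : Fin (n + 1), c ≤ t.1 →
        ((pasc F n (-u)).mulVec v) t = 0 := by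
      intro u t ht
      have := h1 u
      rw [oscSub_eq n u c hc, Submodule.mem_comap] at this
      exact this t (by simp only [Set.mem_setOf_eq]; omega)
    have h2' : ∀ r : Fin (n + 1), r.1 + c ≤ n → v r = 0 := by
      rw [oscInfty_eq] at h2
      intro r hr
      exact h2 r (by simp only [Set.mem_setOf_eq]; omega)
    intro j hj
    simp only [Set.mem_setOf_eq, not_forall] at hj
    obtain ⟨m, hcm, hmn, hC⟩ := hj
    by_cases hjc : j.1 + c ≤ n
    · exact h2' j hjc
    · push_neg at hjc
      have hjm : j.1 ≤ m := by
        by_contra h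
        push_neg at h
        exact hC (by rw [Nat.choose_eq_zero_of_lt h, Nat.cast_zero])
      have hc1 : 1 ≤ c := by have := j.isLt; omega
      set P : Polynomial F := ∑ r : Fin (n + 1),
        Polynomial.C ((m.choose r.1 : F) * v r) * Polynomial.X ^ (m - r.1) with hP
      have heval : ∀ x : F, P.eval x = 0 := by
        intro x
        have hm := h1' (-x) ⟨m, by omega⟩ hcm
        rw [neg_neg] at hm
        have hm2 : ∑ r : Fin (n + 1), ((m.choose r.1 : F) * x ^ (m - r.1)) * v r = 0 := by
          simpa [Matrix.mulVec, dotProduct, pasc] using hm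
        rw [hP]
        simp only [Polynomial.eval_finset_sum, Polynomial.eval_mul, Polynomial.eval_C,
          Polynomial.eval_pow, Polynomial.eval_X]
        rw [← hm2]
        exact Finset.sum_congr rfl fun r _ => by ring
      have hdeg : P.natDegree < c := by
        refine lt_of_le_of_lt (Polynomial.natDegree_sum_le_of_forall_le _ _ ?_)
          (show c - 1 < c by omega)
        intro r _
        by_cases hr : v r = 0
        · simp [hr]
        · have hrn : n + 1 ≤ r.1 + c := by
            by_contra h
            exact hr (h2' r (by omega))
          refine le_trans (Polynomial.natDegree_C_mul_X_pow_le _ _) ?_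
          omega
      have hP0 : P = 0 := by
        refine Polynomial.eq_zero_of_forall_eval_zero_of_natDegree_lt_card P heval ?_
        calc (P.natDegree : Cardinal) < (c : Cardinal) := by exact_mod_cast hdeg
          _ ≤ Cardinal.mk F := hF
      have hcoeff : P.coeff (m - j.1) = 0 := by rw [hP0]; simp
      rw [hP] at hcoeff
      rw [Polynomial.finset_sum_coeff] at hcoeff
      have hstep : ∑ r : Fin (n + 1),
          (Polynomial.C ((m.choose r.1 : F) * v r) * Polynomial.X ^ (m - r.1)).coeff (m - j.1)
          = (m.choose j.1 : F) * v j := by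
        rw [Finset.sum_eq_single j]
        · rw [Polynomial.coeff_C_mul, Polynomial.coeff_X_pow, if_pos rfl, mul_one]
        · intro r _ hrj
          rw [Polynomial.coeff_C_mul, Polynomial.coeff_X_pow]
          by_cases hrm : r.1 ≤ m
          · have hne : ¬ (m - j.1 = m - r.1) := by
              intro h
              exact hrj (Fin.ext (by omega))
            rw [if_neg hne, mul_zero]
          · push_neg at hrm
            rw [Nat.choose_eq_zero_of_lt hrm]
            simp
        · intro h
          exact absurd (Finset.mem_univ j) h
      rw [hstep] at hcoeff
      rcases mul_eq_zero.mp hcoeff with h | h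
      · exact absurd h hC
      · exact h
  · -- easy direction: coordSub's span ≤ nucleus
    rw [show (coordSub n {j : Fin (n + 1) | ∀ m : ℕ, c ≤ m → m ≤ n → (Nat.choose m j.1 : F) = 0}
        : Submodule F (Fin (n + 1) → F)) =
        Submodule.span F {v | ∃ j : Fin (n + 1),
          (∀ m : ℕ, c ≤ m → m ≤ n → (Nat.choose m j.1 : F) = 0) ∧ v = Pi.single j 1} from
      (span_single_eq n _).symm]
    rw [Submodule.span_le]
    rintro w ⟨j, hj, rfl⟩
    show Pi.single j 1 ∈ nucleus F n c
    rw [nucleus, Submodule.mem_inf, Submodule.mem_iInf]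
    constructor
    · intro u
      rw [oscSub_eq n u c hc, Submodule.mem_comap]
      intro t ht
      simp only [Set.mem_setOf_eq, not_lt] at ht
      show ((pasc F n (-u)).mulVec (Pi.single j 1)) t = 0
      have : ((pasc F n (-u)).mulVec (Pi.single j 1)) t =
          ∑ r : Fin (n + 1), (t.1.choose r.1 : F) * (-u) ^ (t.1 - r.1) * (Pi.single j 1 : Fin (n + 1) → F) r := by
        simp [Matrix.mulVec, dotProduct, pasc]
      rw [this, Finset.sum_eq_single j]
      · rw [hj t.1 ht (by omega)]
        simp
      · intro r _ hrj
        rw [Pi.single_eq_of_ne hrj, mul_zero]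
      · intro h
        exact absurd (Finset.mem_univ j) h
    · rw [oscInfty_eq]
      intro r hr
      simp only [Set.mem_setOf_eq, not_le] at hr
      have hrj : r ≠ j := by
        intro h
        have hval := congrArg Fin.val h
        exact lucas_contra F (show j.1 + c ≤ n by omega) hj
      exact Pi.single_eq_of_ne hrj 1
end

section
/- Timmermann's formula: Let F be a field of characteristic p > 0 with #F ≥ n, and n ≥ 2 with base-p digits n_σ. The (n−1)-nucleus of the normal rational curve V_1^n (the intersection of all osculating hyperplanes) has projective dimension n − Π_{σ=0}^∞ (n_σ + 1). -/
open Finset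

section Aux

/-- The set of `k ≤ n` with binomial coefficient `C(n,k)` not divisible by `p`. -/
def lucasSet (p n : ℕ) : Finset ℕ :=
  (Finset.range (n + 1)).filter (fun k => ¬ p ∣ n.choose k)

lemma not_dvd_choose_iff (p : ℕ) (hp : p.Prime) (n k : ℕ) :
    ¬ p ∣ n.choose k ↔ (¬ p ∣ (n % p).choose (k % p) ∧ ¬ p ∣ (n / p).choose (k / p)) := by
  haveI : Fact p.Prime := ⟨hp⟩
  have h := (Choose.choose_modEq_choose_mod_mul_choose_div_nat (n := n) (k := k) (p := p))
  unfold Nat.ModEq at h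
  have hdvd : p ∣ n.choose k ↔ p ∣ (n % p).choose (k % p) * ((n / p).choose (k / p)) := by
    rw [Nat.dvd_iff_mod_eq_zero, Nat.dvd_iff_mod_eq_zero, h]
  rw [hdvd, hp.dvd_mul]
  tauto

lemma lucasSet_card_step (p : ℕ) (hp : p.Prime) (n : ℕ) :
    (lucasSet p n).card = (n % p + 1) * (lucasSet p (n / p)).card := by
  have hp0 : 0 < p := hp.pos
  have hmod : n % p < p := Nat.mod_lt _ hp0
  rw [← Finset.card_range (n % p + 1), ← Finset.card_product]
  apply Finset.card_bij' (fun k _ => (k % p, k / p)) (fun x _ => p * x.2 + x.1)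
  · -- hi : maps into
    intro k hk
    simp only [lucasSet, Finset.mem_filter, Finset.mem_range] at hk
    obtain ⟨hkn, hknd⟩ := hk
    rw [not_dvd_choose_iff p hp] at hknd
    obtain ⟨h1, h2⟩ := hknd
    have hk1 : k % p ≤ n % p := by
      by_contra hlt
      exact h1 (by rw [Nat.choose_eq_zero_of_lt (by omega)]; exact dvd_zero p)
    have hk2 : k / p ≤ n / p := by
      by_contra hlt
      exact h2 (by rw [Nat.choose_eq_zero_of_lt (by omega)]; exact dvd_zero p)
    simp only [Finset.mem_product, Finset.mem_range, lucasSet, Finset.mem_filter]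
    exact ⟨by omega, by omega, h2⟩
  · -- hj : maps back into
    rintro ⟨r, q⟩ hx
    simp only [Finset.mem_product, Finset.mem_range, lucasSet, Finset.mem_filter] at hx
    obtain ⟨hr, hq, hqd⟩ := hx
    have hrp : r < p := by omega
    have hmodeq : (p * q + r) % p = r := by
      rw [Nat.mul_add_mod]; exact Nat.mod_eq_of_lt hrp
    have hdiveq : (p * q + r) / p = q := by
      rw [Nat.mul_add_div hp0, Nat.div_eq_of_lt hrp, Nat.add_zero]
    simp only [lucasSet, Finset.mem_filter, Finset.mem_range]
    constructor
    · have hqle : q ≤ n / p := by omega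
      have hid := Nat.div_add_mod n p
      nlinarith
    · rw [not_dvd_choose_iff p hp, hmodeq, hdiveq]
      refine ⟨?_, hqd⟩
      intro hd
      have hfac : (n % p).choose r ∣ Nat.factorial (n % p) :=
        ⟨Nat.factorial r * Nat.factorial (n % p - r), by
          rw [← Nat.choose_mul_factorial_mul_factorial (show r ≤ n % p by omega), mul_assoc]⟩
      have hpf : p ∣ Nat.factorial (n % p) := hd.trans hfac
      have := (Nat.Prime.dvd_factorial hp).mp hpf
      omega
  · intro k hk
    exact Nat.div_add_mod k p
  · rintro ⟨r, q⟩ hx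
    simp only [Finset.mem_product, Finset.mem_range, lucasSet, Finset.mem_filter] at hx
    have hrp : r < p := by omega
    have h1 : (p * q + r) % p = r := by rw [Nat.mul_add_mod]; exact Nat.mod_eq_of_lt hrp
    have h2 : (p * q + r) / p = q := by
      rw [Nat.mul_add_div hp0, Nat.div_eq_of_lt hrp, Nat.add_zero]
    simp [h1, h2]

lemma lucasSet_zero (p : ℕ) (hp : p.Prime) : lucasSet p 0 = {0} := by
  ext k
  simp only [lucasSet, Finset.mem_filter, Finset.mem_range, Finset.mem_singleton]
  constructor
  · rintro ⟨h, _⟩; omega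
  · rintro rfl
    exact ⟨by omega, by simp [Nat.dvd_one, hp.ne_one]⟩

lemma lucasSet_card_eq_prod (p : ℕ) (hp : p.Prime) :
    ∀ L n : ℕ, n < p ^ L →
      (lucasSet p n).card = ∏ σ ∈ Finset.range L, (digit p n σ + 1) := by
  intro L
  induction L with
  | zero =>
    intro n hn
    simp at hn
    subst hn
    simp [lucasSet_zero p hp]
  | succ L ih =>
    intro n hn
    have hdiv : n / p < p ^ L := by
      rw [Nat.div_lt_iff_lt_mul hp.pos]
      calc n < p ^ (L + 1) := hn
      _ = p ^ L * p := by ring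
    rw [lucasSet_card_step p hp n, ih _ hdiv, Finset.prod_range_succ', mul_comm]
    congr 1
    · apply Finset.prod_congr rfl
      intro σ _
      show digit p (n / p) σ + 1 = digit p n (σ + 1) + 1
      simp [digit, Nat.div_div_eq_div_mul, pow_succ']
    · simp [digit]

variable {F : Type} [Field F]

lemma alt_sum_choose (m : ℕ) :
    ∑ j ∈ Finset.range (m + 1), (-1 : F) ^ j * (m.choose j : F)
      = if m = 0 then 1 else 0 := by
  rcases eq_or_ne m 0 with rfl | hm
  · simp
  · rw [if_neg hm]
    have h := Int.alternating_sum_range_choose_of_ne hm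
    have h2 : ((∑ j ∈ Finset.range (m + 1), ((-1) ^ j * (m.choose j : ℤ)) : ℤ) : F) = 0 := by
      rw [h]; simp
    push_cast at h2
    exact h2

/-- Key "matrix inverse" identity for the osculating matrices. -/
lemma key_identity (n : ℕ) (u : F) (r s : Fin (n + 1)) :
    ∑ t : Fin (n + 1),
      ((r.1.choose t.1 : F) * u ^ (r.1 - t.1)) * ((t.1.choose s.1 : F) * (-u) ^ (t.1 - s.1))
      = if r = s then 1 else 0 := by
  rw [Fin.sum_univ_eq_sum_range (fun t =>
    ((r.1.choose t : F) * u ^ (r.1 - t)) * ((t.choose s.1 : F) * (-u) ^ (t - s.1)))]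
  rcases lt_or_ge r.1 s.1 with hrs | hsr
  · rw [if_neg (by intro h; subst h; omega)]
    apply Finset.sum_eq_zero
    intro t ht
    rcases le_or_gt t r.1 with h1 | h1
    · rw [Nat.choose_eq_zero_of_lt (by omega : (t : ℕ) < s.1)]
      ring
    · rw [Nat.choose_eq_zero_of_lt h1]
      ring
  · have hrn : r.1 < n + 1 := r.2
    have hstep : ∑ t ∈ Finset.range (n + 1),
        ((r.1.choose t : F) * u ^ (r.1 - t)) * ((t.choose s.1 : F) * (-u) ^ (t - s.1))
        = ∑ t ∈ Finset.Icc s.1 r.1,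
        ((r.1.choose t : F) * u ^ (r.1 - t)) * ((t.choose s.1 : F) * (-u) ^ (t - s.1)) := by
      apply (Finset.sum_subset ?_ ?_).symm
      · intro t ht
        simp only [Finset.mem_Icc] at ht
        simp only [Finset.mem_range]
        omega
      · intro t ht hnot
        simp only [Finset.mem_range] at ht
        simp only [Finset.mem_Icc, not_and_or, not_le] at hnot
        rcases hnot with h1 | h1
        · rw [Nat.choose_eq_zero_of_lt h1]; ring
        · rw [Nat.choose_eq_zero_of_lt h1]; ring
    rw [hstep, ← Finset.Ico_add_one_right_eq_Icc, Finset.sum_Ico_eq_sum_range]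
    have hrange : r.1 + 1 - s.1 = r.1 - s.1 + 1 := by omega
    rw [hrange]
    have hterm : ∀ j ∈ Finset.range (r.1 - s.1 + 1),
        ((r.1.choose (s.1 + j) : F) * u ^ (r.1 - (s.1 + j)))
          * (((s.1 + j).choose s.1 : F) * (-u) ^ (s.1 + j - s.1))
        = ((r.1.choose s.1 : F) * u ^ (r.1 - s.1)) * ((-1) ^ j * ((r.1 - s.1).choose j : F)) := by
      intro j hj
      simp only [Finset.mem_range] at hj
      have hjle : j ≤ r.1 - s.1 := by omega
      have hcc : r.1.choose (s.1 + j) * (s.1 + j).choose s.1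
          = r.1.choose s.1 * (r.1 - s.1).choose j := by
        rw [Nat.choose_mul (by omega)]
        congr 2
        omega
      have hcast : (r.1.choose (s.1 + j) : F) * ((s.1 + j).choose s.1 : F)
          = (r.1.choose s.1 : F) * ((r.1 - s.1).choose j : F) := by
        exact_mod_cast congrArg (Nat.cast : ℕ → F) hcc
      have hj2 : s.1 + j - s.1 = j := by omega
      have hpow : u ^ (r.1 - (s.1 + j)) * (-u) ^ j
          = u ^ (r.1 - s.1) * (-1) ^ j := by
        rw [neg_pow]
        have : u ^ (r.1 - (s.1 + j)) * ((-1 : F) ^ j * u ^ j)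
            = (-1) ^ j * (u ^ (r.1 - (s.1 + j)) * u ^ j) := by ring
        rw [this, ← pow_add]
        have : r.1 - (s.1 + j) + j = r.1 - s.1 := by omega
        rw [this]
        ring
      rw [hj2]
      calc ((r.1.choose (s.1 + j) : F) * u ^ (r.1 - (s.1 + j)))
          * (((s.1 + j).choose s.1 : F) * (-u) ^ j)
          = ((r.1.choose (s.1 + j) : F) * ((s.1 + j).choose s.1 : F))
            * (u ^ (r.1 - (s.1 + j)) * (-u) ^ j) := by ring
        _ = ((r.1.choose s.1 : F) * ((r.1 - s.1).choose j : F))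
            * (u ^ (r.1 - s.1) * (-1) ^ j) := by rw [hcast, hpow]
        _ = ((r.1.choose s.1 : F) * u ^ (r.1 - s.1)) * ((-1) ^ j * ((r.1 - s.1).choose j : F)) := by
            ring
    rw [Finset.sum_congr rfl hterm, ← Finset.mul_sum, alt_sum_choose]
    rcases eq_or_lt_of_le hsr with heq | hlt
    · have : r = s := Fin.ext heq.symm
      rw [if_pos this, if_pos (by omega)]
      subst this
      simp
    · rw [if_neg (by omega), if_neg (by intro h; subst h; omega)]
      ring

end Aux

section LAux
variable {F : Type} [Field F]

variable {F : Type} [Field F]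

/-- Every vector expands in the osculating basis at `u`. -/
lemma expand_osc (n : ℕ) (u : F) (x : Fin (n + 1) → F) :
    x = ∑ s : Fin (n + 1),
      (∑ t : Fin (n + 1), ((s.1.choose t.1 : F) * (-u) ^ (s.1 - t.1)) * x t) •
        (fun r : Fin (n + 1) => (r.1.choose s.1 : F) * u ^ (r.1 - s.1)) := by
  funext r
  simp only [Finset.sum_apply, Pi.smul_apply, smul_eq_mul]
  symm
  calc ∑ s : Fin (n + 1),
      (∑ t : Fin (n + 1), ((s.1.choose t.1 : F) * (-u) ^ (s.1 - t.1)) * x t)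
        * ((r.1.choose s.1 : F) * u ^ (r.1 - s.1))
      = ∑ s : Fin (n + 1), ∑ t : Fin (n + 1),
          (((r.1.choose s.1 : F) * u ^ (r.1 - s.1))
            * ((s.1.choose t.1 : F) * (-u) ^ (s.1 - t.1))) * x t := by
        refine Finset.sum_congr rfl fun s _ => ?_
        rw [Finset.sum_mul]
        exact Finset.sum_congr rfl fun t _ => by ring
    _ = ∑ t : Fin (n + 1), ∑ s : Fin (n + 1),
          (((r.1.choose s.1 : F) * u ^ (r.1 - s.1))
            * ((s.1.choose t.1 : F) * (-u) ^ (s.1 - t.1))) * x t := Finset.sum_comm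
    _ = ∑ t : Fin (n + 1),
          (∑ s : Fin (n + 1), ((r.1.choose s.1 : F) * u ^ (r.1 - s.1))
            * ((s.1.choose t.1 : F) * (-u) ^ (s.1 - t.1))) * x t := by
        exact Finset.sum_congr rfl fun t _ => (Finset.sum_mul _ _ _).symm
    _ = ∑ t : Fin (n + 1), (if r = t then (1 : F) else 0) * x t := by
        exact Finset.sum_congr rfl fun t _ => by rw [key_identity]
    _ = x r := by simp

/-- If all `C(n,t) * x t` vanish, then `x` lies in every osculating hyperplane. -/
lemma mem_oscSub_of (n : ℕ) (u : F) (x : Fin (n + 1) → F)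
    (h : ∀ t : Fin (n + 1), (n.choose t.1 : F) * x t = 0) : x ∈ oscSub F n u n := by
  rw [expand_osc n u x, Fin.sum_univ_castSucc]
  apply Submodule.add_mem
  · apply Submodule.sum_mem
    intro s _
    apply Submodule.smul_mem
    apply Submodule.subset_span
    exact ⟨s, rfl⟩
  · have hz : (∑ t : Fin (n + 1),
        (((Fin.last n).1.choose t.1 : F) * (-u) ^ ((Fin.last n).1 - t.1)) * x t) = 0 := by
      apply Finset.sum_eq_zero
      intro t _
      have ht := h t
      simp only [Fin.val_last]
      calc ((n.choose t.1 : F) * (-u) ^ (n - t.1)) * x t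
          = (-u) ^ (n - t.1) * ((n.choose t.1 : F) * x t) := by ring
        _ = 0 := by rw [ht, mul_zero]
    rw [hz, zero_smul]
    exact Submodule.zero_mem _

/-- The linear functional cutting out the osculating hyperplane at `u`. -/
noncomputable def phiMap (n : ℕ) (u : F) : (Fin (n + 1) → F) →ₗ[F] F :=
  ∑ t : Fin (n + 1), ((n.choose t.1 : F) * (-u) ^ (n - t.1)) • (LinearMap.proj t)

lemma phiMap_apply (n : ℕ) (u : F) (x : Fin (n + 1) → F) :
    phiMap n u x = ∑ t : Fin (n + 1), ((n.choose t.1 : F) * (-u) ^ (n - t.1)) * x t := by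
  simp [phiMap, LinearMap.sum_apply, LinearMap.smul_apply, LinearMap.proj_apply, smul_eq_mul]

lemma oscSub_le_ker (n : ℕ) (u : F) :
    oscSub F n u n ≤ LinearMap.ker (phiMap n u) := by
  rw [oscSub, Submodule.span_le]
  rintro _ ⟨s, rfl⟩
  simp only [SetLike.mem_coe, LinearMap.mem_ker]
  rw [phiMap_apply]
  have hs : s.1 < n := s.2
  have hk := key_identity n (-u) (Fin.last n) ⟨s.1, by omega⟩
  simp only [neg_neg, Fin.val_last] at hk
  rw [if_neg (by intro hcon; have := congrArg Fin.val hcon; simp at this; omega)] at hk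
  exact hk

lemma oscInfty_le (n : ℕ) :
    oscInfty F n n ≤ LinearMap.ker (LinearMap.proj (0 : Fin (n + 1)) :
      (Fin (n + 1) → F) →ₗ[F] F) := by
  rw [oscInfty, Submodule.span_le]
  rintro _ ⟨i, hi, rfl⟩
  simp only [SetLike.mem_coe, LinearMap.mem_ker, LinearMap.proj_apply]
  have hi1 : (1 : ℕ) ≤ i.1 := by omega
  apply Pi.single_eq_of_ne
  intro hcon
  have := congrArg Fin.val hcon
  simp at this
  omega

lemma mem_oscInfty_of (n : ℕ) (x : Fin (n + 1) → F) (h : x 0 = 0) :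
    x ∈ oscInfty F n n := by
  have hx : x = ∑ i : Fin (n + 1), x i • (Pi.single i (1 : F) : Fin (n + 1) → F) := by
    funext j
    simp only [Finset.sum_apply, Pi.smul_apply, Pi.single_apply, smul_eq_mul,
      mul_ite, mul_one, mul_zero]
    rw [Finset.sum_ite_eq Finset.univ j x]
    simp
  rw [hx]
  apply Submodule.sum_mem
  intro i _
  by_cases hi : i = 0
  · subst hi
    rw [h, zero_smul]
    exact Submodule.zero_mem _
  · apply Submodule.smul_mem
    apply Submodule.subset_span
    refine ⟨i, ?_, rfl⟩
    have : i.1 ≠ 0 := fun hc => hi (Fin.ext hc)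
    omega

lemma mem_nucleus_iff (n : ℕ) (hn : 2 ≤ n) (hF : (n : Cardinal) ≤ Cardinal.mk F)
    (x : Fin (n + 1) → F) :
    x ∈ nucleus F n n ↔ ∀ t : Fin (n + 1), (n.choose t.1 : F) * x t = 0 := by
  constructor
  · rintro ⟨h1, h2⟩
    have hx0 : x 0 = 0 := oscInfty_le n h2
    have hphi : ∀ u : F, ∑ t : Fin (n + 1), ((n.choose t.1 : F) * (-u) ^ (n - t.1)) * x t = 0 := by
      intro u
      have := oscSub_le_ker n u ((Submodule.mem_iInf _).1 h1 u)
      rw [LinearMap.mem_ker, phiMap_apply] at this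
      exact this
    set P : Polynomial F := ∑ t : Fin (n + 1),
      Polynomial.C ((n.choose t.1 : F) * x t * (-1) ^ (n - t.1)) * Polynomial.X ^ (n - t.1)
      with hP
    have heval : ∀ u : F, P.eval u = 0 := by
      intro u
      rw [hP, Polynomial.eval_finset_sum]
      simp only [Polynomial.eval_mul, Polynomial.eval_C, Polynomial.eval_pow, Polynomial.eval_X]
      rw [← hphi u]
      refine Finset.sum_congr rfl fun t _ => ?_
      rw [neg_pow]
      ring
    have hdeg : P.natDegree ≤ n - 1 := by
      rw [hP]
      apply Polynomial.natDegree_sum_le_of_forall_le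
      intro t _
      by_cases ht : t.1 = 0
      · have ht0 : t = 0 := Fin.ext ht
        subst ht0
        simp only [Fin.val_zero, hx0, Nat.choose_zero_right, Nat.cast_one, mul_zero, zero_mul,
          map_zero, Polynomial.natDegree_zero]
        omega
      · calc (Polynomial.C ((n.choose t.1 : F) * x t * (-1) ^ (n - t.1))
              * Polynomial.X ^ (n - t.1)).natDegree ≤ n - t.1 :=
            Polynomial.natDegree_C_mul_X_pow_le _ _
          _ ≤ n - 1 := by omega
    have hP0 : P = 0 := by
      apply Polynomial.eq_zero_of_forall_eval_zero_of_natDegree_lt_card P heval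
      refine lt_of_lt_of_le ?_ hF
      have : P.natDegree < n := by omega
      exact_mod_cast this
    intro t
    have hc := congrArg (fun Q : Polynomial F => Q.coeff (n - t.1)) hP0
    simp only [hP, Polynomial.finset_sum_coeff, Polynomial.coeff_C_mul, Polynomial.coeff_X_pow,
      Polynomial.coeff_zero] at hc
    rw [Finset.sum_eq_single t] at hc
    · rw [if_pos rfl, mul_one] at hc
      have hne : ((-1 : F)) ^ (n - t.1) ≠ 0 := pow_ne_zero _ (by norm_num)
      have := mul_eq_zero.1 hc
      rcases this with h | h
      · exact h
      · exact absurd h hne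
    · intro b _ hb
      rw [if_neg, mul_zero]
      intro hcon
      have hb1 : b.1 < n + 1 := b.2
      have ht1 : t.1 < n + 1 := t.2
      exact hb (Fin.ext (by omega))
    · intro hcon
      exact absurd (Finset.mem_univ t) hcon
  · intro h
    refine ⟨(Submodule.mem_iInf _).2 fun u => mem_oscSub_of n u x h, mem_oscInfty_of n x ?_⟩
    have h0 := h 0
    simpa using h0

end LAux


/-- **Timmermann's formula**: over a field of characteristic `p > 0` with `#F ≥ n`,
the `(n−1)`-nucleus (intersection of all osculating hyperplanes, so `c = n`) of the
normal rational curve `V_1^n` has projective dimension `n − ∏_σ (n_σ + 1)`,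
i.e. vector-space dimension `n + 1 − ∏_σ (n_σ + 1)`, where `n_σ` are the base-`p`
digits of `n`. (Digits with index `σ > n` vanish, so the product over `σ < n+1` is
the full product.) -/
theorem timmermann_formula (F : Type) [Field F] (p : ℕ) (hp : p.Prime) [CharP F p]
    (n : ℕ) (hn : 2 ≤ n) (hF : (n : Cardinal) ≤ Cardinal.mk F) :
    Module.finrank F (nucleus F n n)
      = n + 1 - ∏ σ ∈ Finset.range (n + 1), (digit p n σ + 1) := by
  classical
  have hmem := mem_nucleus_iff n hn hF (F := F)
  let e : (nucleus F n n) ≃ₗ[F] ({s : Fin (n + 1) // (n.choose s.1 : F) = 0} → F) :=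
    { toFun := fun x s => x.1 s.1
      map_add' := fun _ _ => rfl
      map_smul' := fun _ _ => rfl
      invFun := fun f => ⟨fun s => if h : (n.choose s.1 : F) = 0 then f ⟨s, h⟩ else 0, by
        rw [hmem]
        intro t
        by_cases h : (n.choose t.1 : F) = 0
        · simp [h]
        · simp [h]⟩
      left_inv := by
        rintro ⟨x, hx⟩
        apply Subtype.ext
        funext s
        by_cases h : (n.choose s.1 : F) = 0
        · simp [h]
        · simp only [dif_neg h]
          have := (hmem x).1 hx s
          rcases mul_eq_zero.1 this with h1 | h1
          · exact absurd h1 h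
          · exact h1.symm
      right_inv := by
        intro f
        funext s
        exact dif_pos s.2 }
  rw [e.finrank_eq, Module.finrank_fintype_fun_eq_card]
  have hcard1 : Fintype.card {s : Fin (n + 1) // (n.choose s.1 : F) = 0}
      = Fintype.card {s : Fin (n + 1) // ¬ ¬ p ∣ n.choose s.1} := by
    apply Fintype.card_congr
    apply Equiv.subtypeEquivRight
    intro s
    rw [CharP.cast_eq_zero_iff F p, not_not]
  have hcard2 : Fintype.card {s : Fin (n + 1) // ¬ ¬ p ∣ n.choose s.1}
      = Fintype.card (Fin (n + 1)) - Fintype.card {s : Fin (n + 1) // ¬ p ∣ n.choose s.1} :=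
    Fintype.card_subtype_compl _
  have hcard3 : Fintype.card {s : Fin (n + 1) // ¬ p ∣ n.choose s.1} = (lucasSet p n).card := by
    rw [Fintype.card_subtype]
    apply Finset.card_bij (fun s _ => s.1)
    · intro s hs
      simp only [Finset.mem_filter, Finset.mem_univ, true_and] at hs
      simp only [lucasSet, Finset.mem_filter, Finset.mem_range]
      exact ⟨s.2, hs⟩
    · intro a _ b _ hab
      exact Fin.ext hab
    · intro k hk
      simp only [lucasSet, Finset.mem_filter, Finset.mem_range] at hk
      exact ⟨⟨k, hk.1⟩, by simp [hk.2], rfl⟩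
  have hpow : n < p ^ (n + 1) := by
    calc n < 2 ^ (n + 1) := by
          calc n < 2 ^ n := Nat.lt_two_pow_self
          _ ≤ 2 ^ (n + 1) := Nat.pow_le_pow_right (by norm_num) (by omega)
      _ ≤ p ^ (n + 1) := Nat.pow_le_pow_left hp.two_le _
  rw [hcard1, hcard2, hcard3, lucasSet_card_eq_prod p hp (n + 1) n hpow, Fintype.card_fin]
end
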